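/- arXiv:1605.03453 — 4 statements merged into one kernel-verified Lean document; each statement's English description precedes it below -/
import Mathlib

section
/- Let ψ : ℝⁿ → ℂᴺ be a smooth solution of the Soler equation Dψ = λψ + μ|ψ|²ψ, and define its stress-energy tensor S_{ij} := ⟨γᵢ∂ⱼψ + γⱼ∂ᵢψ, ψ⟩ − δᵢⱼ μ|ψ|⁴ for 1 ≤ i,j ≤ n. Then S is symmetric and divergence-free, i.e. S_{ij} = S_{ji} and ∑ⱼ₌₁ⁿ ∂ⱼS_{ij} = 0 for every i; moreover its trace satisfies ∑ᵢ₌₁ⁿ S_{ii} = 2λ|ψ|² + (2−n)μ|ψ|⁴. -/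
open Matrix MeasureTheory

noncomputable section

/-- Partial derivative of `f` in the `i`-th coordinate direction at `x`. -/
def epd {n : ℕ} {E : Type*} [NormedAddCommGroup E] [NormedSpace ℝ E]
    (f : EuclideanSpace ℝ (Fin n) → E) (i : Fin n) (x : EuclideanSpace ℝ (Fin n)) : E :=
  fderiv ℝ f x (EuclideanSpace.single i 1)

/-- The Euclidean Dirac operator associated to the matrices `γ`. -/
def Dirac {n N : ℕ} (γ : Fin n → Matrix (Fin N) (Fin N) ℂ)
    (ψ : EuclideanSpace ℝ (Fin n) → (Fin N → ℂ)) (x : EuclideanSpace ℝ (Fin n)) :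
    Fin N → ℂ :=
  ∑ i, (γ i).mulVec (epd ψ i x)

/-- Real part of the standard Hermitian inner product on `ℂᴺ`. -/
def rinner {N : ℕ} (a b : Fin N → ℂ) : ℝ := (∑ k, star (a k) * b k).re

/-- Squared Hermitian norm on `ℂᴺ`. -/
def nsq {N : ℕ} (a : Fin N → ℂ) : ℝ := rinner a a

section RinnerAlg

variable {N : ℕ} (a b c : Fin N → ℂ)

lemma rinner_comm : rinner a b = rinner b a := by
  unfold rinner
  rw [show (∑ k, star (a k) * b k) = starRingEnd ℂ (∑ k, star (b k) * a k) by
    rw [map_sum]; exact Finset.sum_congr rfl fun k _ => by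
      simp [mul_comm]]
  exact Complex.conj_re _

lemma rinner_add_left : rinner (a + b) c = rinner a c + rinner b c := by
  simp [rinner, add_mul, Finset.sum_add_distrib]

lemma rinner_add_right : rinner a (b + c) = rinner a b + rinner a c := by
  simp [rinner, mul_add, Finset.sum_add_distrib]

lemma rinner_smul_left (r : ℝ) : rinner (r • a) b = r * rinner a b := by
  simp only [rinner, Pi.smul_apply, star_smul, star_trivial, smul_mul_assoc, ← Finset.smul_sum]
  rw [Complex.real_smul, Complex.re_ofReal_mul]

lemma rinner_smul_right (r : ℝ) : rinner a (r • b) = r * rinner a b := by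
  rw [rinner_comm, rinner_smul_left, rinner_comm]

lemma rinner_neg_left : rinner (-a) b = - rinner a b := by
  simp [rinner, neg_mul, Finset.sum_neg_distrib]

lemma rinner_neg_right : rinner a (-b) = - rinner a b := by
  rw [rinner_comm, rinner_neg_left, rinner_comm]

lemma rinner_sum_left {ι : Type*} (s : Finset ι) (v : ι → Fin N → ℂ) (b : Fin N → ℂ) :
    rinner (∑ i ∈ s, v i) b = ∑ i ∈ s, rinner (v i) b := by
  classical
  induction s using Finset.induction_on with
  | empty => simp [rinner]
  | insert _ _ h ih => simp [Finset.sum_insert h, rinner_add_left, ih]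

lemma rinner_sum_right {ι : Type*} (s : Finset ι) (v : ι → Fin N → ℂ) (b : Fin N → ℂ) :
    rinner b (∑ i ∈ s, v i) = ∑ i ∈ s, rinner b (v i) := by
  rw [rinner_comm, rinner_sum_left]
  exact Finset.sum_congr rfl fun i _ => rinner_comm _ _

lemma rinner_mulVec_left (M : Matrix (Fin N) (Fin N) ℂ) :
    rinner (M.mulVec a) b = rinner a (Mᴴ.mulVec b) := by
  unfold rinner Matrix.mulVec
  congr 1
  simp only [dotProduct, star_sum, star_mul', Finset.sum_mul, Finset.mul_sum,
    Matrix.conjTranspose_apply]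
  rw [Finset.sum_comm]
  exact Finset.sum_congr rfl fun k _ => Finset.sum_congr rfl fun m _ => by ring

lemma rinner_skew {M : Matrix (Fin N) (Fin N) ℂ} (hM : Mᴴ = -M) :
    rinner (M.mulVec a) b = - rinner a (M.mulVec b) := by
  rw [rinner_mulVec_left, hM, Matrix.neg_mulVec, rinner_neg_right]

lemma rinner_skew_self {M : Matrix (Fin N) (Fin N) ℂ} (hM : Mᴴ = -M) (v : Fin N → ℂ) :
    rinner (M.mulVec v) v = 0 := by
  have h1 := rinner_skew (a := v) (b := v) hM
  have h2 := rinner_comm v (M.mulVec v)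
  linarith [h1, h2.symm ▸ h1]

lemma mulVec_sum {ι : Type*} (s : Finset ι) (M : Matrix (Fin N) (Fin N) ℂ)
    (v : ι → Fin N → ℂ) : M.mulVec (∑ i ∈ s, v i) = ∑ i ∈ s, M.mulVec (v i) := by
  classical
  induction s using Finset.induction_on with
  | empty => simp [Matrix.mulVec_zero]
  | insert _ _ h ih => simp [Finset.sum_insert h, Matrix.mulVec_add, ih]

lemma mulVec_real_smul (M : Matrix (Fin N) (Fin N) ℂ) (r : ℝ) (v : Fin N → ℂ) :
    M.mulVec (r • v) = r • M.mulVec v := by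
  ext k
  simp [Matrix.mulVec, dotProduct, Complex.real_smul, Finset.mul_sum]
  exact Finset.sum_congr rfl fun m _ => by ring

end RinnerAlg

section Calc

variable {n N : ℕ} {E : Type*} [NormedAddCommGroup E] [NormedSpace ℝ E]
  {x : EuclideanSpace ℝ (Fin n)}

lemma epd_add {f g : EuclideanSpace ℝ (Fin n) → E} (hf : DifferentiableAt ℝ f x)
    (hg : DifferentiableAt ℝ g x) (i : Fin n) :
    epd (fun y => f y + g y) i x = epd f i x + epd g i x := by
  unfold epd
  rw [fderiv_fun_add hf hg]; rfl

lemma epd_sub {f g : EuclideanSpace ℝ (Fin n) → E} (hf : DifferentiableAt ℝ f x)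
    (hg : DifferentiableAt ℝ g x) (i : Fin n) :
    epd (fun y => f y - g y) i x = epd f i x - epd g i x := by
  unfold epd
  rw [fderiv_fun_sub hf hg]; rfl

lemma epd_const (c : E) (i : Fin n) : epd (fun _ => c) i x = 0 := by
  unfold epd; rw [fderiv_fun_const]; rfl

lemma epd_sum {ι : Type*} (s : Finset ι) {A : ι → EuclideanSpace ℝ (Fin n) → E}
    (h : ∀ j ∈ s, DifferentiableAt ℝ (A j) x) (i : Fin n) :
    epd (fun y => ∑ j ∈ s, A j y) i x = ∑ j ∈ s, epd (A j) i x := by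
  unfold epd
  rw [(HasFDerivAt.fun_sum (fun j hj => ((h j hj).hasFDerivAt))).fderiv,
    ContinuousLinearMap.sum_apply]

lemma epd_clm {F : Type*} [NormedAddCommGroup F] [NormedSpace ℝ F]
    (L : E →L[ℝ] F) {f : EuclideanSpace ℝ (Fin n) → E}
    (hf : DifferentiableAt ℝ f x) (i : Fin n) :
    epd (fun y => L (f y)) i x = L (epd f i x) := by
  unfold epd
  have := (L.hasFDerivAt.comp x hf.hasFDerivAt (f' := fderiv ℝ f x)).fderiv
  rw [show (fun y => L (f y)) = (⇑L ∘ f) from rfl, this]; rfl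

lemma epd_mul {f g : EuclideanSpace ℝ (Fin n) → ℝ} (hf : DifferentiableAt ℝ f x)
    (hg : DifferentiableAt ℝ g x) (i : Fin n) :
    epd (fun y => f y * g y) i x = epd f i x * g x + f x * epd g i x := by
  unfold epd
  rw [fderiv_fun_mul hf hg]
  simp [ContinuousLinearMap.add_apply, ContinuousLinearMap.smul_apply]
  ring

lemma epd_const_mul (c : ℝ) {f : EuclideanSpace ℝ (Fin n) → ℝ}
    (hf : DifferentiableAt ℝ f x) (i : Fin n) :
    epd (fun y => c * f y) i x = c * epd f i x := by
  unfold epd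
  rw [fderiv_const_mul hf]; rfl

lemma epd_const_add (c : ℝ) {f : EuclideanSpace ℝ (Fin n) → ℝ}
    (hf : DifferentiableAt ℝ f x) (i : Fin n) :
    epd (fun y => c + f y) i x = epd f i x := by
  unfold epd
  rw [fderiv_const_add]

lemma epd_smul {c : EuclideanSpace ℝ (Fin n) → ℝ} {f : EuclideanSpace ℝ (Fin n) → E}
    (hc : DifferentiableAt ℝ c x) (hf : DifferentiableAt ℝ f x) (i : Fin n) :
    epd (fun y => c y • f y) i x = epd c i x • f x + c x • epd f i x := by
  unfold epd
  rw [(hc.hasFDerivAt.fun_smul hf.hasFDerivAt).fderiv]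
  simp [ContinuousLinearMap.add_apply]
  abel

end Calc

section RinnerCalc

variable {n N : ℕ} {x : EuclideanSpace ℝ (Fin n)}

def rinnerB (N : ℕ) : (Fin N → ℂ) →L[ℝ] (Fin N → ℂ) →L[ℝ] ℝ :=
  LinearMap.mkContinuous₂
    (LinearMap.mk₂ ℝ rinner rinner_add_left
      (fun r a b => rinner_smul_left a b r)
      rinner_add_right (fun r a b => rinner_smul_right a b r))
    N
    (fun a b => by
      have h1 : ‖rinner a b‖ ≤ ‖∑ k, star (a k) * b k‖ := by
        rw [Real.norm_eq_abs]
        exact Complex.abs_re_le_norm _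
      have h2 : ‖∑ k, star (a k) * b k‖ ≤ ∑ k : Fin N, ‖a‖ * ‖b‖ := by
        refine (norm_sum_le _ _).trans (Finset.sum_le_sum fun k _ => ?_)
        rw [norm_mul, norm_star]
        exact mul_le_mul (norm_le_pi_norm a k) (norm_le_pi_norm b k)
          (norm_nonneg _) (norm_nonneg _)
      calc ‖rinner a b‖ ≤ ∑ k : Fin N, ‖a‖ * ‖b‖ := h1.trans h2
      _ = N * ‖a‖ * ‖b‖ := by
          rw [Finset.sum_const, Finset.card_univ, Fintype.card_fin, nsmul_eq_mul]; ring)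

@[simp] lemma rinnerB_apply (a b : Fin N → ℂ) : rinnerB N a b = rinner a b := rfl

lemma hasFDerivAt_rinner {f g : EuclideanSpace ℝ (Fin n) → (Fin N → ℂ)}
    {F G : EuclideanSpace ℝ (Fin n) →L[ℝ] (Fin N → ℂ)}
    (hf : HasFDerivAt f F x) (hg : HasFDerivAt g G x) :
    HasFDerivAt (fun y => rinner (f y) (g y))
      ((rinnerB N (f x)).comp G + ((rinnerB N).comp F).flip (g x)) x := by
  have hc : HasFDerivAt (fun y => rinnerB N (f y)) ((rinnerB N).comp F) x :=
    (rinnerB N).hasFDerivAt.comp x hf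
  exact hc.clm_apply hg

lemma differentiableAt_rinner {f g : EuclideanSpace ℝ (Fin n) → (Fin N → ℂ)}
    (hf : DifferentiableAt ℝ f x) (hg : DifferentiableAt ℝ g x) :
    DifferentiableAt ℝ (fun y => rinner (f y) (g y)) x :=
  (hasFDerivAt_rinner hf.hasFDerivAt hg.hasFDerivAt).differentiableAt

lemma epd_rinner {f g : EuclideanSpace ℝ (Fin n) → (Fin N → ℂ)}
    (hf : DifferentiableAt ℝ f x) (hg : DifferentiableAt ℝ g x) (i : Fin n) :
    epd (fun y => rinner (f y) (g y)) i x
      = rinner (epd f i x) (g x) + rinner (f x) (epd g i x) := by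
  unfold epd
  rw [(hasFDerivAt_rinner hf.hasFDerivAt hg.hasFDerivAt).fderiv]
  simp only [ContinuousLinearMap.add_apply, ContinuousLinearMap.comp_apply,
    ContinuousLinearMap.flip_apply, rinnerB_apply]
  ring

def mulVecCLM (M : Matrix (Fin N) (Fin N) ℂ) : (Fin N → ℂ) →L[ℝ] (Fin N → ℂ) :=
  LinearMap.toContinuousLinearMap (M.mulVecLin.restrictScalars ℝ)

@[simp] lemma mulVecCLM_apply (M : Matrix (Fin N) (Fin N) ℂ) (v : Fin N → ℂ) :
    mulVecCLM M v = M.mulVec v := rfl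

lemma epd_mulVec (M : Matrix (Fin N) (Fin N) ℂ)
    {f : EuclideanSpace ℝ (Fin n) → (Fin N → ℂ)}
    (hf : DifferentiableAt ℝ f x) (i : Fin n) :
    epd (fun y => M.mulVec (f y)) i x = M.mulVec (epd f i x) := by
  have := epd_clm (mulVecCLM M) hf i
  simpa using this

lemma differentiableAt_mulVec (M : Matrix (Fin N) (Fin N) ℂ)
    {f : EuclideanSpace ℝ (Fin n) → (Fin N → ℂ)}
    (hf : DifferentiableAt ℝ f x) :
    DifferentiableAt ℝ (fun y => M.mulVec (f y)) x :=
  (mulVecCLM M).differentiableAt.comp x hf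

end RinnerCalc

section Smooth

variable {n N : ℕ} {ψ : EuclideanSpace ℝ (Fin n) → (Fin N → ℂ)}

lemma contDiff_epd (hψ : ContDiff ℝ (⊤ : ℕ∞) ψ) (j : Fin n) :
    ContDiff ℝ (⊤ : ℕ∞) (epd ψ j) := by
  have hf : ContDiff ℝ (⊤ : ℕ∞) (fderiv ℝ ψ) := hψ.fderiv_right (by exact_mod_cast le_top)
  exact ((ContinuousLinearMap.apply ℝ (Fin N → ℂ)
    (EuclideanSpace.single j (1:ℝ))).contDiff).comp hf

lemma epd_epd_symm (hψ : ContDiff ℝ (⊤ : ℕ∞) ψ) (i j : Fin n)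
    (x : EuclideanSpace ℝ (Fin n)) :
    epd (epd ψ j) i x = epd (epd ψ i) j x := by
  have hd : ∀ y, HasFDerivAt ψ (fderiv ℝ ψ y) y :=
    fun y => (hψ.differentiable (by simp) y).hasFDerivAt
  have hf' : ContDiff ℝ (⊤ : ℕ∞) (fderiv ℝ ψ) := hψ.fderiv_right (by exact_mod_cast le_top)
  have hf'd : HasFDerivAt (fderiv ℝ ψ) (fderiv ℝ (fderiv ℝ ψ) x) x :=
    (hf'.differentiable (by simp) x).hasFDerivAt
  have key : ∀ a b : Fin n, epd (epd ψ b) a x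
      = fderiv ℝ (fderiv ℝ ψ) x (EuclideanSpace.single a (1:ℝ))
          (EuclideanSpace.single b (1:ℝ)) := by
    intro a b
    have h1 : HasFDerivAt (fun y => (ContinuousLinearMap.apply ℝ (Fin N → ℂ)
        (EuclideanSpace.single b (1:ℝ))) (fderiv ℝ ψ y))
        ((ContinuousLinearMap.apply ℝ (Fin N → ℂ)
          (EuclideanSpace.single b (1:ℝ))).comp (fderiv ℝ (fderiv ℝ ψ) x)) x :=
      (ContinuousLinearMap.apply ℝ (Fin N → ℂ)
        (EuclideanSpace.single b (1:ℝ))).hasFDerivAt.comp x hf'd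
    have h2 : epd ψ b = fun y => (ContinuousLinearMap.apply ℝ (Fin N → ℂ)
        (EuclideanSpace.single b (1:ℝ))) (fderiv ℝ ψ y) := rfl
    rw [show epd (epd ψ b) a x = fderiv ℝ (epd ψ b) x (EuclideanSpace.single a (1:ℝ))
      from rfl, h2, h1.fderiv]
    rfl
  rw [key i j, key j i]
  exact second_derivative_symmetric hd hf'd _ _

end Smooth


/-- The matrices `γᵢ` are skew-Hermitian and satisfy the Clifford relations
`γᵢγⱼ + γⱼγᵢ = -2 δᵢⱼ Id`. -/
def IsCliffordFamily {n N : ℕ} (γ : Fin n → Matrix (Fin N) (Fin N) ℂ) : Prop :=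
  (∀ i, (γ i)ᴴ = -(γ i)) ∧
  (∀ i j, γ i * γ j + γ j * γ i =
    if i = j then -(2 : ℂ) • (1 : Matrix (Fin N) (Fin N) ℂ) else 0)

/-- The Soler equation `Dψ = λψ + μ|ψ|²ψ`. -/
def IsSolerSolution {n N : ℕ} (γ : Fin n → Matrix (Fin N) (Fin N) ℂ) (lam mu : ℝ)
    (ψ : EuclideanSpace ℝ (Fin n) → (Fin N → ℂ)) : Prop :=
  ∀ x, Dirac γ ψ x = (lam + mu * nsq (ψ x)) • ψ x

/-- The stress-energy tensor of the Soler model: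
`S_{ij} = ⟨γᵢ∂ⱼψ + γⱼ∂ᵢψ, ψ⟩ - δᵢⱼ μ |ψ|⁴`. -/
def solerStress {n N : ℕ} (γ : Fin n → Matrix (Fin N) (Fin N) ℂ) (mu : ℝ)
    (ψ : EuclideanSpace ℝ (Fin n) → (Fin N → ℂ)) (i j : Fin n)
    (x : EuclideanSpace ℝ (Fin n)) : ℝ :=
  rinner ((γ i).mulVec (epd ψ j x) + (γ j).mulVec (epd ψ i x)) (ψ x)
    - (if i = j then 1 else 0) * (mu * (nsq (ψ x)) ^ 2)

/-- for a smooth solution of the Soler equation the stress-energy tensor is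
symmetric and divergence-free, and its trace is `2λ|ψ|² + (2-n)μ|ψ|⁴`. -/
theorem solerStress_symm_divFree_trace {n N : ℕ} (hn : 1 ≤ n) (hN : 1 ≤ N)
    (γ : Fin n → Matrix (Fin N) (Fin N) ℂ) (hγ : IsCliffordFamily γ)
    (lam mu : ℝ) (ψ : EuclideanSpace ℝ (Fin n) → (Fin N → ℂ))
    (hψ : ContDiff ℝ (⊤ : ℕ∞) ψ) (hsoler : IsSolerSolution γ lam mu ψ) :
    (∀ i j x, solerStress γ mu ψ i j x = solerStress γ mu ψ j i x) ∧
    (∀ i x, ∑ j, epd (fun y => solerStress γ mu ψ i j y) j x = 0) ∧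
    (∀ x, ∑ i, solerStress γ mu ψ i i x
      = 2 * lam * nsq (ψ x) + (2 - (n : ℝ)) * mu * (nsq (ψ x)) ^ 2) := by
  obtain ⟨hskew, hcliff⟩ := hγ
  have hψd : Differentiable ℝ ψ := hψ.differentiable (by simp)
  have hepdD : ∀ j, Differentiable ℝ (epd ψ j) :=
    fun j => (contDiff_epd hψ j).differentiable (by simp)
  have hnsq : Differentiable ℝ (fun y => nsq (ψ y)) := by
    intro y
    exact differentiableAt_rinner (hψd y) (hψd y)
  -- Clifford consequences
  have hsq : ∀ i, γ i * γ i = -1 := by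
    intro i
    have h := hcliff i i
    rw [if_pos rfl] at h
    have h2 : (2:ℂ) • (γ i * γ i) = (2:ℂ) • (-1 : Matrix (Fin N) (Fin N) ℂ) := by
      rw [two_smul, h, neg_smul, smul_neg]
    exact smul_right_injective (Matrix (Fin N) (Fin N) ℂ) two_ne_zero h2
  have hii : ∀ i (v : Fin N → ℂ), (γ i).mulVec ((γ i).mulVec v) = -v := by
    intro i v
    rw [Matrix.mulVec_mulVec, hsq i, Matrix.neg_mulVec, Matrix.one_mulVec]
  have hanti : ∀ i j, i ≠ j → (γ i * γ j)ᴴ = -(γ i * γ j) := by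
    intro i j hij
    have h := hcliff i j
    rw [if_neg hij] at h
    rw [Matrix.conjTranspose_mul, hskew i, hskew j, Matrix.neg_mul, Matrix.mul_neg, neg_neg]
    rw [add_comm] at h
    exact eq_neg_of_add_eq_zero_left h
  have hij0 : ∀ i j, i ≠ j → ∀ v : Fin N → ℂ,
      rinner ((γ i).mulVec ((γ j).mulVec v)) v = 0 := by
    intro i j hij v
    rw [Matrix.mulVec_mulVec]
    exact rinner_skew_self (hanti i j hij) v
  refine ⟨?_, ?_, ?_⟩
  · -- symmetry
    intro i j x
    unfold solerStress
    rw [add_comm ((γ i).mulVec (epd ψ j x)), show (if i = j then (1:ℝ) else 0) = if j = i then 1 else 0 by simp [eq_comm]]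
  · -- divergence-free
    intro i x
    have hepdnsq : ∀ j, epd (fun y => nsq (ψ y)) j x = 2 * rinner (epd ψ j x) (ψ x) := by
      intro j
      have h := epd_rinner (f := ψ) (g := ψ) (hψd x) (hψd x) j
      have h2 : epd (fun y => nsq (ψ y)) j x = epd (fun y => rinner (ψ y) (ψ y)) j x := rfl
      rw [h2, h, rinner_comm (ψ x)]
      ring
    -- derivative of Dirac, two ways
    have hDdiff : ∀ k, DifferentiableAt ℝ (fun y => (γ k).mulVec (epd ψ k y)) x :=
      fun k => differentiableAt_mulVec _ (hepdD k x)
    have hD : ∀ a, epd (Dirac γ ψ) a x = ∑ k, (γ k).mulVec (epd (epd ψ k) a x) := by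
      intro a
      rw [show Dirac γ ψ = fun y => ∑ k, (γ k).mulVec (epd ψ k y) from rfl,
        epd_sum Finset.univ (fun k _ => hDdiff k) a]
      exact Finset.sum_congr rfl fun k _ => epd_mulVec _ (hepdD k x) a
    have hD' : ∀ a, epd (Dirac γ ψ) a x
        = (mu * epd (fun y => nsq (ψ y)) a x) • ψ x
          + (lam + mu * nsq (ψ x)) • epd ψ a x := by
      intro a
      rw [show Dirac γ ψ = fun y => (lam + mu * nsq (ψ y)) • ψ y from funext hsoler,
        epd_smul (((hnsq x).const_mul mu).const_add lam) (hψd x) a]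
      congr 2
      rw [epd_const_add lam ((hnsq x).const_mul mu) a, epd_const_mul mu (hnsq x) a]
    -- per-j derivative of the stress tensor
    have hSj : ∀ j, epd (fun y => solerStress γ mu ψ i j y) j x
        = rinner ((γ i).mulVec (epd (epd ψ j) j x)) (ψ x)
        + rinner ((γ j).mulVec (epd (epd ψ i) j x)) (ψ x)
        + rinner ((γ j).mulVec (epd ψ i x)) (epd ψ j x)
        - (if i = j then 1 else 0)
            * (mu * (2 * nsq (ψ x) * epd (fun y => nsq (ψ y)) j x)) := by
      intro j
      have hfun : (fun y => solerStress γ mu ψ i j y)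
          = fun y => (rinner ((γ i).mulVec (epd ψ j y)) (ψ y)
              + rinner ((γ j).mulVec (epd ψ i y)) (ψ y))
            - (if i = j then (1:ℝ) else 0)
                * (mu * (nsq (ψ y) * nsq (ψ y))) := by
        funext y
        rw [solerStress, rinner_add_left, sq]
      have d1 : DifferentiableAt ℝ
          (fun y => rinner ((γ i).mulVec (epd ψ j y)) (ψ y)) x :=
        differentiableAt_rinner (differentiableAt_mulVec _ (hepdD j x)) (hψd x)
      have d2 : DifferentiableAt ℝ
          (fun y => rinner ((γ j).mulVec (epd ψ i y)) (ψ y)) x :=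
        differentiableAt_rinner (differentiableAt_mulVec _ (hepdD i x)) (hψd x)
      have dd : DifferentiableAt ℝ
          (fun y => (if i = j then (1:ℝ) else 0) * (mu * (nsq (ψ y) * nsq (ψ y)))) x :=
        ((((hnsq x).mul (hnsq x)).const_mul mu).const_mul _)
      rw [hfun, epd_sub (d1.fun_add d2) dd j, epd_add d1 d2 j,
        epd_rinner (differentiableAt_mulVec _ (hepdD j x)) (hψd x) j,
        epd_rinner (differentiableAt_mulVec _ (hepdD i x)) (hψd x) j,
        epd_mulVec _ (hepdD j x) j, epd_mulVec _ (hepdD i x) j,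
        epd_const_mul _ (((hnsq x).fun_mul (hnsq x)).const_mul mu) j,
        epd_const_mul mu ((hnsq x).fun_mul (hnsq x)) j,
        epd_mul (hnsq x) (hnsq x) j,
        rinner_skew_self (hskew i) (epd ψ j x)]
      ring
    -- the Laplacian-type identity
    have hT : rinner ((γ i).mulVec (∑ j, epd (epd ψ j) j x)) (ψ x)
        = (mu * (2 * rinner (epd ψ i x) (ψ x))) * nsq (ψ x) := by
      set W : Fin N → ℂ := ∑ j, (γ j).mulVec (epd (Dirac γ ψ) j x) with hW
      set T : Fin N → ℂ := ∑ j, epd (epd ψ j) j x with hTdef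
      have hWa : W = ∑ j, ∑ k, (γ j * γ k).mulVec (epd (epd ψ k) j x) := by
        rw [hW]
        refine Finset.sum_congr rfl fun j _ => ?_
        rw [hD j, _root_.mulVec_sum]
        exact Finset.sum_congr rfl fun k _ => Matrix.mulVec_mulVec _ _ _
      have hswap : W = ∑ j, ∑ k, (γ k * γ j).mulVec (epd (epd ψ k) j x) := by
        rw [hWa, Finset.sum_comm]
        refine Finset.sum_congr rfl fun j _ => Finset.sum_congr rfl fun k _ => ?_
        rw [epd_epd_symm hψ k j x]
      have hWb : W = -T := by
        have hmv2 : ∀ v : Fin N → ℂ,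
            (-(2:ℂ) • (1 : Matrix (Fin N) (Fin N) ℂ)).mulVec v = -v + -v := by
          intro v
          rw [Matrix.smul_mulVec, Matrix.one_mulVec, neg_smul, two_smul, neg_add]
        have h2W : W + W = -T + -T := by
          calc W + W
              = ∑ j, ∑ k, ((γ j * γ k).mulVec (epd (epd ψ k) j x)
                + (γ k * γ j).mulVec (epd (epd ψ k) j x)) := by
                nth_rewrite 2 [hswap]
                rw [hWa, ← Finset.sum_add_distrib]
                exact Finset.sum_congr rfl fun j _ => (Finset.sum_add_distrib).symm
            _ = ∑ j, ∑ k, (if j = k then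
                  ((-(2:ℂ) • (1 : Matrix (Fin N) (Fin N) ℂ)).mulVec (epd (epd ψ k) j x))
                  else 0) := by
                refine Finset.sum_congr rfl fun j _ => Finset.sum_congr rfl fun k _ => ?_
                rw [← Matrix.add_mulVec, hcliff j k]
                split_ifs with h
                · rfl
                · exact Matrix.zero_mulVec _
            _ = ∑ j, (-(2:ℂ) • (1 : Matrix (Fin N) (Fin N) ℂ)).mulVec (epd (epd ψ j) j x) := by
                refine Finset.sum_congr rfl fun j _ => ?_
                rw [Finset.sum_ite_eq]
                simp
            _ = -T + -T := by
                rw [Finset.sum_congr rfl fun j _ => hmv2 (epd (epd ψ j) j x),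
                  Finset.sum_add_distrib, hTdef]
                rw [← Finset.sum_neg_distrib]
        have h3 : (2:ℝ) • W = (2:ℝ) • (-T) := by
          rw [two_smul, two_smul]; exact h2W
        exact smul_right_injective (Fin N → ℂ) two_ne_zero h3
      have hWc : rinner ((γ i).mulVec W) (ψ x)
          = -((mu * (2 * rinner (epd ψ i x) (ψ x))) * nsq (ψ x)) := by
        have hW2 : W = (∑ j, (mu * epd (fun y => nsq (ψ y)) j x) • ((γ j).mulVec (ψ x)))
            + ((lam + mu * nsq (ψ x)) * (lam + mu * nsq (ψ x))) • ψ x := by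
          rw [hW]
          have hterm : ∀ j, (γ j).mulVec (epd (Dirac γ ψ) j x)
              = (mu * epd (fun y => nsq (ψ y)) j x) • ((γ j).mulVec (ψ x))
                + (lam + mu * nsq (ψ x)) • ((γ j).mulVec (epd ψ j x)) := by
            intro j
            rw [hD' j, Matrix.mulVec_add, mulVec_real_smul, mulVec_real_smul]
          rw [Finset.sum_congr rfl fun j _ => hterm j, Finset.sum_add_distrib,
            ← Finset.smul_sum,
            show (∑ j, (γ j).mulVec (epd ψ j x)) = Dirac γ ψ x from rfl, hsoler x, smul_smul]
        rw [hW2, Matrix.mulVec_add, rinner_add_left, mulVec_real_smul, rinner_smul_left,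
          rinner_skew_self (hskew i) (ψ x), _root_.mulVec_sum, rinner_sum_left]
        have hjterm : ∀ j, rinner ((γ i).mulVec
              ((mu * epd (fun y => nsq (ψ y)) j x) • ((γ j).mulVec (ψ x)))) (ψ x)
            = if i = j then
                (mu * epd (fun y => nsq (ψ y)) j x) * (- nsq (ψ x)) else 0 := by
          intro j
          rw [mulVec_real_smul, rinner_smul_left]
          by_cases h : i = j
          · subst h
            rw [if_pos rfl, hii i (ψ x), rinner_neg_left,
              show rinner (ψ x) (ψ x) = nsq (ψ x) from rfl]
          · rw [if_neg h, hij0 i j h (ψ x), mul_zero]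
        rw [Finset.sum_congr rfl fun j _ => hjterm j, Finset.sum_ite_eq]
        simp only [Finset.mem_univ, if_true, hepdnsq i]
        ring
      have hTval : rinner ((γ i).mulVec T) (ψ x)
          = (mu * (2 * rinner (epd ψ i x) (ψ x))) * nsq (ψ x) := by
        have hTW : T = -W := by rw [hWb, neg_neg]
        rw [hTW, Matrix.mulVec_neg, rinner_neg_left, hWc, neg_neg]
      rw [hTdef] at hTval
      exact hTval
    -- assemble
    set s := nsq (ψ x) with hs
    set ri := rinner (epd ψ i x) (ψ x) with hri
    have e1 : ∑ j, rinner ((γ i).mulVec (epd (epd ψ j) j x)) (ψ x)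
        = (mu * (2 * ri)) * s := by
      rw [← rinner_sum_left, ← _root_.mulVec_sum, hT]
    have e2 : ∑ j, rinner ((γ j).mulVec (epd (epd ψ i) j x)) (ψ x)
        = (mu * (2 * ri)) * s + (lam + mu * s) * ri := by
      have h1 : ∀ j, epd (epd ψ i) j x = epd (epd ψ j) i x :=
        fun j => epd_epd_symm hψ j i x
      calc ∑ j, rinner ((γ j).mulVec (epd (epd ψ i) j x)) (ψ x)
          = rinner (∑ j, (γ j).mulVec (epd (epd ψ j) i x)) (ψ x) := by
            rw [rinner_sum_left]
            exact Finset.sum_congr rfl fun j _ => by rw [h1 j]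
        _ = rinner (epd (Dirac γ ψ) i x) (ψ x) := by rw [← hD i]
        _ = (mu * (2 * ri)) * s + (lam + mu * s) * ri := by
            rw [hD' i, rinner_add_left, rinner_smul_left, rinner_smul_left, hepdnsq i,
              show rinner (ψ x) (ψ x) = nsq (ψ x) from rfl]
    have e3 : ∑ j, rinner ((γ j).mulVec (epd ψ i x)) (epd ψ j x)
        = -((lam + mu * s) * ri) := by
      calc ∑ j, rinner ((γ j).mulVec (epd ψ i x)) (epd ψ j x)
          = ∑ j, -(rinner (epd ψ i x) ((γ j).mulVec (epd ψ j x))) :=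
            Finset.sum_congr rfl fun j _ => rinner_skew _ _ (hskew j)
        _ = -(rinner (epd ψ i x) (∑ j, (γ j).mulVec (epd ψ j x))) := by
            rw [Finset.sum_neg_distrib, ← rinner_sum_right]
        _ = -((lam + mu * s) * ri) := by
            rw [show (∑ j, (γ j).mulVec (epd ψ j x)) = Dirac γ ψ x from rfl, hsoler x,
              rinner_smul_right]
    have e4 : ∑ j, (if i = j then (1:ℝ) else 0)
          * (mu * (2 * nsq (ψ x) * epd (fun y => nsq (ψ y)) j x))
        = mu * (2 * s * (2 * ri)) := by
      simp only [ite_mul, one_mul, zero_mul]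
      rw [Finset.sum_ite_eq]
      simp only [Finset.mem_univ, if_true, hepdnsq i]
      rfl
    rw [Finset.sum_congr rfl fun j _ => hSj j, Finset.sum_sub_distrib,
      Finset.sum_add_distrib, Finset.sum_add_distrib, e1, e2, e3, e4]
    ring
  · -- trace
    intro x
    have h1 : ∀ i, solerStress γ mu ψ i i x
        = 2 * rinner ((γ i).mulVec (epd ψ i x)) (ψ x) - mu * nsq (ψ x) ^ 2 := by
      intro i
      simp [solerStress, rinner_add_left, two_mul]
    rw [Finset.sum_congr rfl fun i _ => h1 i, Finset.sum_sub_distrib, ← Finset.mul_sum,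
      ← rinner_sum_left, show (∑ i, (γ i).mulVec (epd ψ i x)) = Dirac γ ψ x from rfl,
      hsoler x, rinner_smul_left, Finset.sum_const, Finset.card_univ, Fintype.card_fin,
      nsmul_eq_mul, show rinner (ψ x) (ψ x) = nsq (ψ x) from rfl]
    ring
end
end

section
/- Let ψ : ℝⁿ → ℂᴺ be a smooth solution of the Soler equation Dψ = λψ + μ|ψ|²ψ which is also a twistor spinor, i.e. ∂ᵢψ + (1/n)γᵢDψ = 0 for all i = 1, …, n. Then the function |ψ|² is constant on ℝⁿ. -/
open Matrix MeasureTheory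

noncomputable section

/-- A twistor spinor on flat `ℝⁿ`: `∂ᵢψ + (1/n) γᵢ Dψ = 0` for all `i`. -/
def IsTwistorSpinor {n N : ℕ} (γ : Fin n → Matrix (Fin N) (Fin N) ℂ)
    (ψ : EuclideanSpace ℝ (Fin n) → (Fin N → ℂ)) : Prop :=
  ∀ i x, epd ψ i x + ((1 : ℝ) / n) • (γ i).mulVec (Dirac γ ψ x) = 0

lemma skew_re_zero {N : ℕ} (A : Matrix (Fin N) (Fin N) ℂ) (hA : Aᴴ = -A) (a : Fin N → ℂ) :
    (∑ k, star (a k) * A.mulVec a k).re = 0 := by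
  set S := ∑ k, star (a k) * A.mulVec a k with hS
  have hstar : star S = -S := by
    rw [hS]
    simp only [star_sum, StarMul.star_mul, star_star, mulVec, dotProduct, star_sum,
      Finset.mul_sum, Finset.sum_mul]
    rw [Finset.sum_comm, ← Finset.sum_neg_distrib]
    refine Finset.sum_congr rfl fun j _ => ?_
    rw [← Finset.sum_neg_distrib]
    refine Finset.sum_congr rfl fun k _ => ?_
    have h1 : star (A k j) = -A j k := by
      have := congrFun (congrFun hA j) k
      simpa [conjTranspose_apply] using this
    rw [h1]; ring
  have h2 : S.re = -S.re := by
    have := congrArg Complex.re hstar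
    simpa using this
  linarith

lemma nsq_eq {N : ℕ} (a : Fin N → ℂ) :
    nsq a = ∑ k, ((a k).re * (a k).re + (a k).im * (a k).im) := by
  unfold nsq rinner
  rw [Complex.re_sum]
  refine Finset.sum_congr rfl fun k _ => ?_
  simp [Complex.mul_re]


/-- a smooth solution of the Soler equation which is also a twistor spinor
has constant norm. -/
theorem soler_twistor_const_norm {n N : ℕ} (hn : 1 ≤ n) (hN : 1 ≤ N)
    (γ : Fin n → Matrix (Fin N) (Fin N) ℂ) (hγ : IsCliffordFamily γ)
    (lam mu : ℝ) (ψ : EuclideanSpace ℝ (Fin n) → (Fin N → ℂ))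
    (hψ : ContDiff ℝ (⊤ : ℕ∞) ψ) (hsoler : IsSolerSolution γ lam mu ψ)
    (htwistor : IsTwistorSpinor γ ψ) :
    ∀ x y, nsq (ψ x) = nsq (ψ y) := by
  obtain ⟨hskew, -⟩ := hγ
  have hψd : Differentiable ℝ ψ := hψ.differentiable (by simp)
  -- Step A : formula for partial derivatives
  have hA : ∀ i x, epd ψ i x
      = (-((lam + mu * nsq (ψ x)) / n)) • (γ i).mulVec (ψ x) := by
    intro i x
    have ht := htwistor i x
    have h1 : epd ψ i x = -(((1 : ℝ) / n) • (γ i).mulVec (Dirac γ ψ x)) :=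
      eq_neg_of_add_eq_zero_left ht
    rw [h1, hsoler x]
    rw [Matrix.mulVec_smul]
    rw [smul_smul, ← neg_smul]
    congr 1
    field_simp
  -- Step C : the derivative of nsq ∘ ψ is 0 everywhere
  have main : ∀ x, HasFDerivAt (fun y => nsq (ψ y)) (0 : EuclideanSpace ℝ (Fin n) →L[ℝ] ℝ) x := by
    intro x
    set D := fderiv ℝ ψ x with hDdef
    have hD : HasFDerivAt ψ D x := (hψd x).hasFDerivAt
    set a : Fin N → ℂ := ψ x with ha
    set L : EuclideanSpace ℝ (Fin n) →L[ℝ] ℝ :=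
      ∑ k, (((a k).re • (Complex.reCLM.comp
            ((ContinuousLinearMap.proj k : (Fin N → ℂ) →L[ℝ] ℂ).comp D))
          + (a k).re • (Complex.reCLM.comp
            ((ContinuousLinearMap.proj k : (Fin N → ℂ) →L[ℝ] ℂ).comp D)))
        + ((a k).im • (Complex.imCLM.comp
            ((ContinuousLinearMap.proj k : (Fin N → ℂ) →L[ℝ] ℂ).comp D))
          + (a k).im • (Complex.imCLM.comp
            ((ContinuousLinearMap.proj k : (Fin N → ℂ) →L[ℝ] ℂ).comp D)))) with hLdef
    have hf : HasFDerivAt (fun y => nsq (ψ y)) L x := by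
      have hfun : (fun y => nsq (ψ y))
          = fun y => ∑ k, ((ψ y k).re * (ψ y k).re + (ψ y k).im * (ψ y k).im) := by
        funext y; exact nsq_eq (ψ y)
      rw [hfun, hLdef]
      refine HasFDerivAt.fun_sum fun k _ => ?_
      have hk : HasFDerivAt (fun y => ψ y k)
          ((ContinuousLinearMap.proj k : (Fin N → ℂ) →L[ℝ] ℂ).comp D) x :=
        (ContinuousLinearMap.proj k : (Fin N → ℂ) →L[ℝ] ℂ).hasFDerivAt.comp x hD
      have hre : HasFDerivAt (fun y => (ψ y k).re)
          (Complex.reCLM.comp ((ContinuousLinearMap.proj k : (Fin N → ℂ) →L[ℝ] ℂ).comp D)) x :=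
        Complex.reCLM.hasFDerivAt.comp x hk
      have him : HasFDerivAt (fun y => (ψ y k).im)
          (Complex.imCLM.comp ((ContinuousLinearMap.proj k : (Fin N → ℂ) →L[ℝ] ℂ).comp D)) x :=
        Complex.imCLM.hasFDerivAt.comp x hk
      exact (hre.mul hre).add (him.mul him)
    have hL0 : L = 0 := by
      refine ContinuousLinearMap.coe_injective ?_
      refine (EuclideanSpace.basisFun (Fin n) ℝ).toBasis.ext fun i => ?_
      have hbasis : (EuclideanSpace.basisFun (Fin n) ℝ).toBasis i
          = EuclideanSpace.single i 1 := by
        simp [OrthonormalBasis.coe_toBasis]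
      rw [hbasis]
      have hDi : D (EuclideanSpace.single i 1) = epd ψ i x := rfl
      have hepd := hA i x
      set r : ℝ := -((lam + mu * nsq (ψ x)) / n) with hr
      set w : Fin N → ℂ := (γ i).mulVec (ψ x) with hw
      have hval : (L : EuclideanSpace ℝ (Fin n) →ₗ[ℝ] ℝ) (EuclideanSpace.single i 1)
          = ∑ k, (((a k).re * (epd ψ i x k).re + (a k).re * (epd ψ i x k).re)
            + ((a k).im * (epd ψ i x k).im + (a k).im * (epd ψ i x k).im)) := by
        simp [hLdef, hDi]
      rw [hval]
      have hskewre : (∑ k, star (a k) * w k).re = 0 := skew_re_zero (γ i) (hskew i) a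
      have hre0 : ∑ k, ((a k).re * (w k).re + (a k).im * (w k).im) = 0 := by
        rw [← hskewre, Complex.re_sum]
        refine Finset.sum_congr rfl fun k _ => ?_
        simp [Complex.mul_re]
      calc ∑ k, (((a k).re * (epd ψ i x k).re + (a k).re * (epd ψ i x k).re)
            + ((a k).im * (epd ψ i x k).im + (a k).im * (epd ψ i x k).im))
          = (2 * r) * ∑ k, ((a k).re * (w k).re + (a k).im * (w k).im) := by
            rw [Finset.mul_sum]
            refine Finset.sum_congr rfl fun k _ => ?_
            have : epd ψ i x k = r • w k := by rw [hepd]; rfl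
            rw [this]
            rw [Complex.real_smul, Complex.mul_re]
            simp
            ring
        _ = 0 := by rw [hre0]; ring
    rw [hL0] at hf
    exact hf
  intro x y
  exact is_const_of_fderiv_eq_zero (fun z => (main z).differentiableAt)
    (fun z => (main z).fderiv) x y
end
end

section
/- Pohozaev-type identity: let ψ : ℝⁿ → ℂᴺ be a smooth solution of the Soler equation Dψ = λψ + μ|ψ|²ψ, and let η : [0,∞) → ℝ be smooth, compactly supported, and constant in a neighborhood of 0. Then ∫_{ℝⁿ} (2λ|ψ|² + (2−n)μ|ψ|⁴) η(|x|) dx = −∫_{ℝⁿ} ( 2⟨ψ, ∂_r·∇_{∂_r}ψ⟩ − μ|ψ|⁴ ) |x| η′(|x|) dx, where for x ≠ 0 one sets ⟨ψ, ∂_r·∇_{∂_r}ψ⟩(x) := ∑_{i,j} (xᵢxⱼ/|x|²) ⟨ψ(x), γᵢ ∂ⱼψ(x)⟩ (the integrand on the right vanishes near the origin since η′ does). -/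
open Matrix MeasureTheory

noncomputable section

/-- The radial term `⟨ψ, ∂_r·∇_{∂_r}ψ⟩(x) = ∑_{i,j} ((x-x₀)ᵢ(x-x₀)ⱼ/|x-x₀|²) ⟨ψ, γᵢ∂ⱼψ⟩`. -/
def radTerm {n N : ℕ} (γ : Fin n → Matrix (Fin N) (Fin N) ℂ)
    (ψ : EuclideanSpace ℝ (Fin n) → (Fin N → ℂ))
    (x₀ x : EuclideanSpace ℝ (Fin n)) : ℝ :=
  ∑ i, ∑ j, ((x i - x₀ i) * (x j - x₀ j) / ‖x - x₀‖ ^ 2)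
    * rinner (ψ x) ((γ i).mulVec (epd ψ j x))

namespace SolerAux

variable {n N : ℕ}

lemma rinner_comm (a b : Fin N → ℂ) : rinner a b = rinner b a := by
  unfold rinner
  rw [← Complex.conj_re (∑ k, star (b k) * a k)]
  congr 1
  rw [map_sum]
  exact Finset.sum_congr rfl fun k _ => by simp [mul_comm]

lemma rinner_add_right (a b c : Fin N → ℂ) : rinner a (b + c) = rinner a b + rinner a c := by
  simp [rinner, mul_add, Finset.sum_add_distrib]

lemma rinner_add_left (a b c : Fin N → ℂ) : rinner (a + b) c = rinner a c + rinner b c := by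
  rw [rinner_comm, rinner_add_right, rinner_comm c a, rinner_comm c b]

lemma rinner_smul_right (r : ℝ) (a b : Fin N → ℂ) : rinner a (r • b) = r * rinner a b := by
  simp [rinner, Finset.mul_sum, Complex.real_smul, mul_left_comm, Complex.re_ofReal_mul]

lemma rinner_smul_left (r : ℝ) (a b : Fin N → ℂ) : rinner (r • a) b = r * rinner a b := by
  rw [rinner_comm, rinner_smul_right, rinner_comm]

lemma rinner_zero_right (a : Fin N → ℂ) : rinner a 0 = 0 := by simp [rinner]

lemma rinner_sum_right {ι : Type*} (s : Finset ι) (a : Fin N → ℂ) (f : ι → Fin N → ℂ) :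
    rinner a (∑ i ∈ s, f i) = ∑ i ∈ s, rinner a (f i) := by
  classical
  induction s using Finset.induction with
  | empty => simp [rinner_zero_right]
  | insert _ _ h ih => simp [Finset.sum_insert h, rinner_add_right, ih]

lemma rinner_neg_left (a b : Fin N → ℂ) : rinner (-a) b = - rinner a b := by
  simp [rinner, Finset.sum_neg_distrib]

lemma rinner_mulVec (M : Matrix (Fin N) (Fin N) ℂ) (a b : Fin N → ℂ) :
    rinner a (M.mulVec b) = rinner (Mᴴ.mulVec a) b := by
  unfold rinner
  congr 1
  simp only [Matrix.mulVec, dotProduct, conjTranspose_apply, star_sum, StarMul.star_mul, star_star,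
    Finset.mul_sum, Finset.sum_mul]
  rw [Finset.sum_comm]
  refine Finset.sum_congr rfl fun k _ => Finset.sum_congr rfl fun l _ => ?_
  ring

lemma rinner_mulVec_skew {M : Matrix (Fin N) (Fin N) ℂ} (hM : Mᴴ = -M) (a b : Fin N → ℂ) :
    rinner a (M.mulVec b) = - rinner (M.mulVec a) b := by
  rw [rinner_mulVec, hM, Matrix.neg_mulVec, rinner_neg_left]

lemma rinner_self_mulVec_skew {M : Matrix (Fin N) (Fin N) ℂ} (hM : Mᴴ = -M) (a : Fin N → ℂ) :
    rinner a (M.mulVec a) = 0 := by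
  have h := rinner_mulVec_skew hM a a
  rw [rinner_comm (M.mulVec a) a] at h
  linarith [h]


abbrev Eu (n : ℕ) := EuclideanSpace ℝ (Fin n)

def rinnerL : (Fin N → ℂ) →ₗ[ℝ] (Fin N → ℂ) →ₗ[ℝ] ℝ :=
  LinearMap.mk₂ ℝ rinner rinner_add_left rinner_smul_left rinner_add_right rinner_smul_right

def rinnerB : (Fin N → ℂ) →L[ℝ] (Fin N → ℂ) →L[ℝ] ℝ :=
  LinearMap.toContinuousLinearMap
    { toFun := fun a => LinearMap.toContinuousLinearMap (rinnerL a)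
      map_add' := fun a b => by
        ext c
        simp [rinnerL, rinner_add_left]
      map_smul' := fun r a => by
        ext c
        simp [rinnerL, rinner_smul_left] }

@[simp] lemma rinnerB_apply (a b : Fin N → ℂ) : rinnerB a b = rinner a b := rfl

def mulVecB (M : Matrix (Fin N) (Fin N) ℂ) : (Fin N → ℂ) →L[ℝ] (Fin N → ℂ) :=
  LinearMap.toContinuousLinearMap (M.mulVecLin.restrictScalars ℝ)

@[simp] lemma mulVecB_apply (M : Matrix (Fin N) (Fin N) ℂ) (a : Fin N → ℂ) :
    mulVecB M a = M.mulVec a := rfl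

lemma epd_of_hasFDerivAt {F : Type*} [NormedAddCommGroup F] [NormedSpace ℝ F]
    {f : Eu n → F} {L : Eu n →L[ℝ] F} {x : Eu n} (h : HasFDerivAt f L x) (i : Fin n) :
    epd f i x = L (EuclideanSpace.single i 1) := by
  rw [epd, h.fderiv]

lemma epd_rinner {f g : Eu n → Fin N → ℂ} {x : Eu n}
    (hf : DifferentiableAt ℝ f x) (hg : DifferentiableAt ℝ g x) (i : Fin n) :
    epd (fun y => rinner (f y) (g y)) i x
      = rinner (epd f i x) (g x) + rinner (f x) (epd g i x) := by
  have hF : HasFDerivAt (fun y => (rinnerB (f y) : (Fin N → ℂ) →L[ℝ] ℝ))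
      ((rinnerB : (Fin N → ℂ) →L[ℝ] _).comp (fderiv ℝ f x)) x :=
    (rinnerB.hasFDerivAt).comp x hf.hasFDerivAt
  have h2 := epd_of_hasFDerivAt (hF.clm_apply hg.hasFDerivAt) i
  have h3 : epd (fun y => rinner (f y) (g y)) i x
      = epd (fun y => rinnerB (f y) (g y)) i x := rfl
  rw [h3, h2]
  simp [ContinuousLinearMap.add_apply, ContinuousLinearMap.comp_apply,
    ContinuousLinearMap.flip_apply, epd]
  ring

lemma epd_mulVec {f : Eu n → Fin N → ℂ} {x : Eu n} (hf : DifferentiableAt ℝ f x)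
    (M : Matrix (Fin N) (Fin N) ℂ) (i : Fin n) :
    epd (fun y => M.mulVec (f y)) i x = M.mulVec (epd f i x) := by
  have h : HasFDerivAt (fun y => mulVecB M (f y)) ((mulVecB M).comp (fderiv ℝ f x)) x :=
    (mulVecB M).hasFDerivAt.comp x hf.hasFDerivAt
  have h2 := epd_of_hasFDerivAt h i
  have h3 : epd (fun y => M.mulVec (f y)) i x = epd (fun y => mulVecB M (f y)) i x := rfl
  rw [h3, h2]
  simp [epd]

lemma epd_sum {F : Type*} [NormedAddCommGroup F] [NormedSpace ℝ F] {ι : Type*}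
    (s : Finset ι) {f : ι → Eu n → F} {x : Eu n}
    (hf : ∀ j ∈ s, DifferentiableAt ℝ (f j) x) (i : Fin n) :
    epd (fun y => ∑ j ∈ s, f j y) i x = ∑ j ∈ s, epd (f j) i x := by
  have h : HasFDerivAt (fun y => ∑ j ∈ s, f j y) (∑ j ∈ s, fderiv ℝ (f j) x) x :=
    HasFDerivAt.fun_sum fun j hj => (hf j hj).hasFDerivAt
  rw [epd_of_hasFDerivAt h i]
  simp [epd]

lemma epd_mul {f g : Eu n → ℝ} {x : Eu n}
    (hf : DifferentiableAt ℝ f x) (hg : DifferentiableAt ℝ g x) (i : Fin n) :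
    epd (fun y => f y * g y) i x = epd f i x * g x + f x * epd g i x := by
  have h := epd_of_hasFDerivAt (hf.hasFDerivAt.fun_mul hg.hasFDerivAt) i
  rw [h]
  simp [epd]
  ring

lemma epd_smul {F : Type*} [NormedAddCommGroup F] [NormedSpace ℝ F]
    {c : Eu n → ℝ} {f : Eu n → F} {x : Eu n}
    (hc : DifferentiableAt ℝ c x) (hf : DifferentiableAt ℝ f x) (i : Fin n) :
    epd (fun y => c y • f y) i x = epd c i x • f x + c x • epd f i x := by
  have h := epd_of_hasFDerivAt (hc.hasFDerivAt.fun_smul hf.hasFDerivAt) i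
  rw [h]
  simp [epd]
  abel

lemma epd_coord {x : Eu n} (i j : Fin n) :
    epd (fun y : Eu n => y j) i x = if i = j then 1 else 0 := by
  have h : HasFDerivAt (fun y : Eu n => y j) (EuclideanSpace.proj (𝕜 := ℝ) j) x :=
    (EuclideanSpace.proj (𝕜 := ℝ) j).hasFDerivAt
  rw [epd_of_hasFDerivAt h i]
  simp [EuclideanSpace.single_apply, eq_comm]

lemma contDiff_epd {F : Type*} [NormedAddCommGroup F] [NormedSpace ℝ F]
    {f : Eu n → F} (hf : ContDiff ℝ (⊤ : ℕ∞) f) (i : Fin n) :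
    ContDiff ℝ (⊤ : ℕ∞) (epd f i) := by
  have h1 : ContDiff ℝ (⊤ : ℕ∞) (fderiv ℝ f) := hf.fderiv_right (by exact_mod_cast le_top)
  exact h1.clm_apply contDiff_const

lemma contDiff_rinner {f g : Eu n → Fin N → ℂ}
    (hf : ContDiff ℝ (⊤ : ℕ∞) f) (hg : ContDiff ℝ (⊤ : ℕ∞) g) :
    ContDiff ℝ (⊤ : ℕ∞) (fun y => rinner (f y) (g y)) := by
  have : ContDiff ℝ (⊤ : ℕ∞) (fun y => rinnerB (f y) (g y)) :=
    (rinnerB.contDiff.comp hf).clm_apply hg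
  exact this

lemma contDiff_mulVec {f : Eu n → Fin N → ℂ} (hf : ContDiff ℝ (⊤ : ℕ∞) f)
    (M : Matrix (Fin N) (Fin N) ℂ) :
    ContDiff ℝ (⊤ : ℕ∞) (fun y => M.mulVec (f y)) :=
  (mulVecB M).contDiff.comp hf

lemma epd_const_add {f : Eu n → ℝ} {x : Eu n} (hf : DifferentiableAt ℝ f x) (r : ℝ) (i : Fin n) :
    epd (fun y => r + f y) i x = epd f i x := by
  rw [epd_of_hasFDerivAt (hf.hasFDerivAt.const_add r) i]; rfl

lemma epd_const_mul {f : Eu n → ℝ} {x : Eu n} (hf : DifferentiableAt ℝ f x) (r : ℝ) (i : Fin n) :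
    epd (fun y => r * f y) i x = r * epd f i x := by
  rw [epd_of_hasFDerivAt (hf.hasFDerivAt.const_mul r) i]; simp [epd]

lemma epd_sub {f g : Eu n → ℝ} {x : Eu n} (hf : DifferentiableAt ℝ f x)
    (hg : DifferentiableAt ℝ g x) (i : Fin n) :
    epd (fun y => f y - g y) i x = epd f i x - epd g i x := by
  rw [epd_of_hasFDerivAt (hf.hasFDerivAt.fun_sub hg.hasFDerivAt) i]; simp [epd]

lemma rinner_sum_left {ι : Type*} (s : Finset ι) (a : Fin N → ℂ) (f : ι → Fin N → ℂ) :
    rinner (∑ i ∈ s, f i) a = ∑ i ∈ s, rinner (f i) a := by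
  rw [rinner_comm, rinner_sum_right]
  exact Finset.sum_congr rfl fun i _ => rinner_comm _ _

section Core

variable {γ : Fin n → Matrix (Fin N) (Fin N) ℂ} {lam mu : ℝ} {ψ : Eu n → Fin N → ℂ}

lemma diff_psi (hψ : ContDiff ℝ (⊤ : ℕ∞) ψ) : Differentiable ℝ ψ :=
  hψ.differentiable (by simp)

lemma diff_epd (hψ : ContDiff ℝ (⊤ : ℕ∞) ψ) (i : Fin n) : Differentiable ℝ (epd ψ i) :=
  (contDiff_epd hψ i).differentiable (by simp)

lemma contDiff_nsq_psi (hψ : ContDiff ℝ (⊤ : ℕ∞) ψ) :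
    ContDiff ℝ (⊤ : ℕ∞) (fun y => nsq (ψ y)) := contDiff_rinner hψ hψ

lemma diff_nsq_psi (hψ : ContDiff ℝ (⊤ : ℕ∞) ψ) : Differentiable ℝ (fun y => nsq (ψ y)) :=
  (contDiff_nsq_psi hψ).differentiable (by simp)

lemma contDiff_MQ (hψ : ContDiff ℝ (⊤ : ℕ∞) ψ) (j i : Fin n) :
    ContDiff ℝ (⊤ : ℕ∞) (fun y => (γ j).mulVec (epd ψ i y)) :=
  contDiff_mulVec (contDiff_epd hψ i) (γ j)

lemma contDiff_Q (hψ : ContDiff ℝ (⊤ : ℕ∞) ψ) (j i : Fin n) :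
    ContDiff ℝ (⊤ : ℕ∞) (fun y => rinner (ψ y) ((γ j).mulVec (epd ψ i y))) :=
  contDiff_rinner hψ (contDiff_MQ hψ j i)

lemma diff_Q (hψ : ContDiff ℝ (⊤ : ℕ∞) ψ) (j i : Fin n) :
    Differentiable ℝ (fun y => rinner (ψ y) ((γ j).mulVec (epd ψ i y))) :=
  (contDiff_Q hψ j i).differentiable (by simp)

lemma epd_nsq (hψ : ContDiff ℝ (⊤ : ℕ∞) ψ) (i : Fin n) (x : Eu n) :
    epd (fun y => nsq (ψ y)) i x = 2 * rinner (ψ x) (epd ψ i x) := by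
  have h : epd (fun y => nsq (ψ y)) i x = epd (fun y => rinner (ψ y) (ψ y)) i x := rfl
  rw [h, epd_rinner (diff_psi hψ x) (diff_psi hψ x) i, rinner_comm]
  ring

lemma epd_epd_symm (hψ : ContDiff ℝ (⊤ : ℕ∞) ψ) (i j : Fin n) (x : Eu n) :
    epd (epd ψ i) j x = epd (epd ψ j) i x := by
  have hd : ∀ y, HasFDerivAt ψ (fderiv ℝ ψ y) y := fun y => (diff_psi hψ y).hasFDerivAt
  have hf' : Differentiable ℝ (fderiv ℝ ψ) :=
    (hψ.fderiv_right (m := (⊤ : ℕ∞)) (by exact_mod_cast le_top)).differentiable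
      (by simp)
  have key : ∀ a b : Fin n, epd (epd ψ a) b x
      = fderiv ℝ (fderiv ℝ ψ) x (EuclideanSpace.single b 1) (EuclideanSpace.single a 1) := by
    intro a b
    have h : epd ψ a = fun y => (fderiv ℝ ψ y) (EuclideanSpace.single a 1) := rfl
    rw [epd, h, fderiv_clm_apply (hf' x) (differentiableAt_const _)]
    simp
  rw [key i j, key j i,
    second_derivative_symmetric hd (hf' x).hasFDerivAt _ _]

lemma epd_dirac (hψ : ContDiff ℝ (⊤ : ℕ∞) ψ) (i : Fin n) (x : Eu n) :
    epd (Dirac γ ψ) i x = ∑ j, (γ j).mulVec (epd (epd ψ j) i x) := by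
  have h : epd (Dirac γ ψ) i x = epd (fun y => ∑ j, (γ j).mulVec (epd ψ j y)) i x := rfl
  rw [h, epd_sum Finset.univ
    (fun j _ => ((contDiff_MQ hψ j j).differentiable (by simp)) x) i]
  exact Finset.sum_congr rfl fun j _ => epd_mulVec ((diff_epd hψ j) x) (γ j) i

lemma epd_dirac_soler (hψ : ContDiff ℝ (⊤ : ℕ∞) ψ) (hsoler : IsSolerSolution γ lam mu ψ)
    (i : Fin n) (x : Eu n) :
    epd (Dirac γ ψ) i x = (mu * (2 * rinner (ψ x) (epd ψ i x))) • ψ x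
      + (lam + mu * nsq (ψ x)) • epd ψ i x := by
  have h : Dirac γ ψ = fun y => (lam + mu * nsq (ψ y)) • ψ y := funext hsoler
  have hc : DifferentiableAt ℝ (fun y => lam + mu * nsq (ψ y)) x :=
    (differentiableAt_const lam).add (((diff_nsq_psi hψ) x).const_mul mu)
  rw [h, epd_smul hc (diff_psi hψ x) i]
  have hc2 : epd (fun y => lam + mu * nsq (ψ y)) i x = mu * (2 * rinner (ψ x) (epd ψ i x)) := by
    rw [epd_const_add ((diff_nsq_psi hψ x).const_mul mu) lam i,
      epd_const_mul (diff_nsq_psi hψ x) mu i, epd_nsq hψ i x]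
  rw [hc2]

lemma sum_Q_diag (hsoler : IsSolerSolution γ lam mu ψ) (x : Eu n) :
    ∑ j, rinner (ψ x) ((γ j).mulVec (epd ψ j x)) = (lam + mu * nsq (ψ x)) * nsq (ψ x) := by
  rw [← rinner_sum_right]
  have h : (∑ j, (γ j).mulVec (epd ψ j x)) = Dirac γ ψ x := rfl
  rw [h, hsoler x, rinner_smul_right]
  rfl

lemma sum_epd_Q (hγ : IsCliffordFamily γ) (hψ : ContDiff ℝ (⊤ : ℕ∞) ψ)
    (hsoler : IsSolerSolution γ lam mu ψ) (i : Fin n) (x : Eu n) :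
    ∑ j, epd (fun y => rinner (ψ y) ((γ j).mulVec (epd ψ i y))) j x
      = 2 * mu * nsq (ψ x) * rinner (ψ x) (epd ψ i x) := by
  have step : ∀ j, epd (fun y => rinner (ψ y) ((γ j).mulVec (epd ψ i y))) j x
      = rinner (epd ψ j x) ((γ j).mulVec (epd ψ i x))
        + rinner (ψ x) ((γ j).mulVec (epd (epd ψ j) i x)) := by
    intro j
    rw [epd_rinner (diff_psi hψ x)
      (((contDiff_MQ hψ j i).differentiable (by simp)) x) j,
      epd_mulVec ((diff_epd hψ i) x) (γ j) j, epd_epd_symm hψ i j x]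
  rw [Finset.sum_congr rfl fun j _ => step j, Finset.sum_add_distrib]
  have hA : ∑ j, rinner (epd ψ j x) ((γ j).mulVec (epd ψ i x))
      = -((lam + mu * nsq (ψ x)) * rinner (ψ x) (epd ψ i x)) := by
    have h1 : ∀ j : Fin n, rinner (epd ψ j x) ((γ j).mulVec (epd ψ i x))
        = - rinner ((γ j).mulVec (epd ψ j x)) (epd ψ i x) :=
      fun j => rinner_mulVec_skew (hγ.1 j) _ _
    rw [Finset.sum_congr rfl fun j _ => h1 j, Finset.sum_neg_distrib, ← rinner_sum_left]
    have h2 : (∑ j, (γ j).mulVec (epd ψ j x)) = Dirac γ ψ x := rfl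
    rw [h2, hsoler x, rinner_smul_left]
  have hB : ∑ j, rinner (ψ x) ((γ j).mulVec (epd (epd ψ j) i x))
      = mu * (2 * rinner (ψ x) (epd ψ i x)) * nsq (ψ x)
        + (lam + mu * nsq (ψ x)) * rinner (ψ x) (epd ψ i x) := by
    rw [← rinner_sum_right, ← epd_dirac hψ i x, epd_dirac_soler hψ hsoler i x,
      rinner_add_right, rinner_smul_right, rinner_smul_right]
    rfl
  rw [hA, hB]
  ring

lemma sum_epd_V (hγ : IsCliffordFamily γ) (hψ : ContDiff ℝ (⊤ : ℕ∞) ψ)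
    (hsoler : IsSolerSolution γ lam mu ψ) (x : Eu n) :
    ∑ j, epd (fun y => 2 * (∑ i, y i * rinner (ψ y) ((γ j).mulVec (epd ψ i y)))
        - mu * (nsq (ψ y))^2 * y j) j x
      = 2 * lam * nsq (ψ x) + (2 - (n : ℝ)) * mu * (nsq (ψ x))^2 := by
  have dS : Differentiable ℝ (fun y => nsq (ψ y)) := diff_nsq_psi hψ
  have dSq : Differentiable ℝ (fun y => (nsq (ψ y))^2) := by
    simpa [pow_two] using dS.fun_mul dS
  have dS2 : Differentiable ℝ (fun y => mu * (nsq (ψ y))^2) := dSq.const_mul mu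
  have dCoord : ∀ j : Fin n, Differentiable ℝ (fun y : Eu n => y j) :=
    fun j => (EuclideanSpace.proj (𝕜 := ℝ) j).differentiable
  have expand : ∀ j : Fin n,
      epd (fun y => 2 * (∑ i, y i * rinner (ψ y) ((γ j).mulVec (epd ψ i y)))
        - mu * (nsq (ψ y))^2 * y j) j x
      = 2 * rinner (ψ x) ((γ j).mulVec (epd ψ j x))
        + 2 * (∑ i, x i * epd (fun y => rinner (ψ y) ((γ j).mulVec (epd ψ i y))) j x)
        - mu * (4 * rinner (ψ x) (epd ψ j x) * nsq (ψ x)) * x j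
        - mu * (nsq (ψ x))^2 := by
    intro j
    have dsum : DifferentiableAt ℝ
        (fun y => ∑ i, y i * rinner (ψ y) ((γ j).mulVec (epd ψ i y))) x := by
      apply DifferentiableAt.fun_sum
      intro i _
      exact ((dCoord i) x).mul ((diff_Q hψ j i) x)
    rw [epd_sub ((dsum.const_mul 2 : DifferentiableAt ℝ _ x)) ((dS2 x).fun_mul ((dCoord j) x)) j,
      epd_const_mul dsum 2 j,
      epd_sum Finset.univ (fun i _ => ((dCoord i) x).fun_mul ((diff_Q hψ j i) x)) j]
    have hterm : ∀ i : Fin n,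
        epd (fun y => y i * rinner (ψ y) ((γ j).mulVec (epd ψ i y))) j x
        = (if j = i then rinner (ψ x) ((γ j).mulVec (epd ψ i x)) else 0)
          + x i * epd (fun y => rinner (ψ y) ((γ j).mulVec (epd ψ i y))) j x := by
      intro i
      rw [epd_mul ((dCoord i) x) ((diff_Q hψ j i) x) j, epd_coord j i]
      by_cases h : j = i <;> simp [h]
    rw [Finset.sum_congr rfl fun i _ => hterm i, Finset.sum_add_distrib, Finset.sum_ite_eq]
    have hS2 : epd (fun y => mu * (nsq (ψ y))^2) j x
        = mu * (4 * rinner (ψ x) (epd ψ j x) * nsq (ψ x)) := by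
      rw [epd_const_mul (dSq x) mu j]
      have h3 : epd (fun y => (nsq (ψ y))^2) j x
          = epd (fun y => nsq (ψ y) * nsq (ψ y)) j x := by
        congr 1; funext y; ring
      rw [h3, epd_mul (dS x) (dS x) j, epd_nsq hψ j x]
      ring
    rw [epd_mul (dS2 x) ((dCoord j) x) j, epd_coord j j, hS2]
    simp only [Finset.mem_univ, if_pos rfl, if_true]
    ring
  rw [Finset.sum_congr rfl fun j _ => expand j]
  simp only [Finset.sum_sub_distrib, Finset.sum_add_distrib]
  have hDiag : ∑ j, 2 * rinner (ψ x) ((γ j).mulVec (epd ψ j x))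
      = 2 * ((lam + mu * nsq (ψ x)) * nsq (ψ x)) := by
    rw [← Finset.mul_sum, sum_Q_diag hsoler x]
  have hCross : ∑ j, 2 * (∑ i, x i * epd
      (fun y => rinner (ψ y) ((γ j).mulVec (epd ψ i y))) j x)
      = 4 * mu * nsq (ψ x) * ∑ i, x i * rinner (ψ x) (epd ψ i x) := by
    rw [← Finset.mul_sum, Finset.sum_comm]
    rw [Finset.sum_congr rfl fun i (_ : i ∈ Finset.univ) => (Finset.mul_sum _ _ _).symm]
    rw [Finset.sum_congr rfl fun i (_ : i ∈ Finset.univ) =>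
      congrArg (fun t => x i * t) (sum_epd_Q hγ hψ hsoler i x)]
    rw [Finset.mul_sum, Finset.mul_sum]
    refine Finset.sum_congr rfl fun i _ => ?_
    ring
  have hRad : ∑ j, mu * (4 * rinner (ψ x) (epd ψ j x) * nsq (ψ x)) * x j
      = 4 * mu * nsq (ψ x) * ∑ i, x i * rinner (ψ x) (epd ψ i x) := by
    rw [Finset.mul_sum]
    refine Finset.sum_congr rfl fun i _ => ?_
    ring
  have hConst : ∑ _j : Fin n, mu * (nsq (ψ x))^2 = (n : ℝ) * (mu * (nsq (ψ x))^2) := by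
    rw [Finset.sum_const, Finset.card_univ, Fintype.card_fin, nsmul_eq_mul]
  rw [hDiag, hCross, hRad, hConst]
  ring

end Core

section Cutoff

variable {η : ℝ → ℝ}

lemma deriv_eta_zero (hη0 : ∃ δ > (0 : ℝ), ∀ t : ℝ, |t| < δ → η t = η 0) :
    ∀ t : ℝ, |t| < (Classical.choose hη0) → deriv η t = 0 := by
  obtain ⟨hδ, hconst⟩ := Classical.choose_spec hη0
  intro t ht
  have hev : η =ᶠ[nhds t] (fun _ => η 0) := by
    have hopen : IsOpen {s : ℝ | |s| < Classical.choose hη0} := by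
      have : {s : ℝ | |s| < Classical.choose hη0} = Metric.ball (0:ℝ) (Classical.choose hη0) := by
        ext s; simp [Metric.mem_ball, Real.dist_eq]
      rw [this]; exact Metric.isOpen_ball
    filter_upwards [hopen.mem_nhds ht] with s hs
    exact hconst s hs
  rw [hev.deriv_eq, deriv_const]

lemma norm_sq_eq_sum (x : Eu n) : ∑ i, x i * x i = ‖x‖ ^ 2 := by
  rw [EuclideanSpace.norm_eq, Real.sq_sqrt (by positivity)]
  exact Finset.sum_congr rfl fun i _ => by
    rw [Real.norm_eq_abs, sq_abs, sq]

lemma hasFDerivAt_normsq (x : Eu n) :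
    HasFDerivAt (fun y : Eu n => ∑ i, y i * y i)
      (∑ i, ((x i) • (EuclideanSpace.proj (𝕜 := ℝ) i)
        + (x i) • (EuclideanSpace.proj (𝕜 := ℝ) i))) x := by
  apply HasFDerivAt.fun_sum
  intro i _
  exact ((EuclideanSpace.proj (𝕜 := ℝ) i).hasFDerivAt).mul
    ((EuclideanSpace.proj (𝕜 := ℝ) i).hasFDerivAt)

lemma epd_eta_norm (hη : ContDiff ℝ (⊤ : ℕ∞) η) {x : Eu n} (hx : x ≠ 0) (j : Fin n) :
    epd (fun y => η ‖y‖) j x = deriv η ‖x‖ * x j / ‖x‖ := by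
  have hr : ‖x‖ ≠ 0 := norm_ne_zero_iff.mpr hx
  have hS : (∑ i, x i * x i) ≠ 0 := by
    rw [norm_sq_eq_sum]; positivity
  have hsqrt : HasDerivAt Real.sqrt (1 / (2 * Real.sqrt (∑ i, x i * x i))) (∑ i, x i * x i) :=
    Real.hasDerivAt_sqrt hS
  have hns : HasFDerivAt (fun y : Eu n => Real.sqrt (∑ i, y i * y i))
      ((1 / (2 * Real.sqrt (∑ i, x i * x i))) •
        (∑ i, ((x i) • (EuclideanSpace.proj (𝕜 := ℝ) i)
          + (x i) • (EuclideanSpace.proj (𝕜 := ℝ) i)))) x :=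
    hsqrt.comp_hasFDerivAt x (hasFDerivAt_normsq x)
  have hηd : HasDerivAt η (deriv η (Real.sqrt (∑ i, x i * x i)))
      (Real.sqrt (∑ i, x i * x i)) :=
    ((hη.differentiable (by simp)) _).hasDerivAt
  have hcomp := hηd.comp_hasFDerivAt x hns
  have hfun : (fun y : Eu n => η ‖y‖) = fun y : Eu n => η (Real.sqrt (∑ i, y i * y i)) := by
    funext y
    congr 1
    rw [EuclideanSpace.norm_eq]
    congr 1
    exact Finset.sum_congr rfl fun i _ => by rw [Real.norm_eq_abs, sq_abs, sq]
  have hnx : Real.sqrt (∑ i, x i * x i) = ‖x‖ := by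
    rw [norm_sq_eq_sum, Real.sqrt_sq (norm_nonneg x)]
  have hcomp' : HasFDerivAt (fun y : Eu n => η (Real.sqrt (∑ i, y i * y i)))
      (deriv η (Real.sqrt (∑ i, x i * x i)) •
        (1 / (2 * Real.sqrt (∑ i, x i * x i))) •
          (∑ i, ((x i) • (EuclideanSpace.proj (𝕜 := ℝ) i)
            + (x i) • (EuclideanSpace.proj (𝕜 := ℝ) i)))) x := hcomp
  rw [hfun, epd_of_hasFDerivAt hcomp' j]
  simp only [ContinuousLinearMap.coe_smul', Pi.smul_apply, ContinuousLinearMap.coe_sum',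
    Finset.sum_apply, ContinuousLinearMap.add_apply, PiLp.proj_apply, smul_eq_mul,
    hnx]
  have : ∀ i : Fin n, x i * (EuclideanSpace.single j (1:ℝ)) i
      + x i * (EuclideanSpace.single j (1:ℝ)) i
      = if i = j then 2 * x i else 0 := by
    intro i
    by_cases h : i = j <;> simp [EuclideanSpace.single_apply, h] <;> ring
  rw [Finset.sum_congr rfl fun i _ => this i, Finset.sum_ite_eq' Finset.univ j _]
  simp only [Finset.mem_univ, if_true]
  field_simp

lemma epd_eta_norm_zero (hη0 : ∃ δ > (0 : ℝ), ∀ t : ℝ, |t| < δ → η t = η 0) (j : Fin n) :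
    epd (fun y : Eu n => η ‖y‖) j 0 = 0 := by
  obtain ⟨hδ, hconst⟩ := Classical.choose_spec hη0
  have hev : (fun y : Eu n => η ‖y‖) =ᶠ[nhds (0 : Eu n)] (fun _ => η 0) := by
    filter_upwards [Metric.ball_mem_nhds (0 : Eu n) hδ] with y hy
    exact hconst ‖y‖ (by rwa [abs_of_nonneg (norm_nonneg y), ← dist_zero_right])
  rw [epd, hev.fderiv_eq, fderiv_const_apply]
  simp

lemma contDiff_eta_norm (hη : ContDiff ℝ (⊤ : ℕ∞) η)
    (hη0 : ∃ δ > (0 : ℝ), ∀ t : ℝ, |t| < δ → η t = η 0) :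
    ContDiff ℝ (⊤ : ℕ∞) (fun y : Eu n => η ‖y‖) := by
  obtain ⟨hδ, hconst⟩ := Classical.choose_spec hη0
  rw [contDiff_iff_contDiffAt]
  intro x
  by_cases hx : x = 0
  · subst hx
    apply ContDiffAt.congr_of_eventuallyEq (contDiffAt_const (c := η 0))
    filter_upwards [Metric.ball_mem_nhds (0 : Eu n) hδ] with y hy
    exact hconst ‖y‖ (by rwa [abs_of_nonneg (norm_nonneg y), ← dist_zero_right])
  · exact hη.contDiffAt.comp x (contDiffAt_norm (𝕜 := ℝ) hx)

lemma hasCompactSupport_eta_norm (hηsupp : HasCompactSupport η) :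
    HasCompactSupport (fun y : Eu n => η ‖y‖) := by
  obtain ⟨R, hR⟩ := hηsupp.isCompact.isBounded.subset_closedBall 0
  apply HasCompactSupport.intro (isCompact_closedBall (0 : Eu n) R)
  intro x hx
  apply image_eq_zero_of_notMem_tsupport
  intro hmem
  apply hx
  have := hR hmem
  rw [Metric.mem_closedBall] at this ⊢
  rw [dist_zero_right] at this ⊢
  rwa [Real.norm_eq_abs, abs_of_nonneg (norm_nonneg x)] at this

end Cutoff

section Main

variable {γ : Fin n → Matrix (Fin N) (Fin N) ℂ} {lam mu : ℝ} {ψ : Eu n → Fin N → ℂ} {η : ℝ → ℝ}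

def Vv (γ : Fin n → Matrix (Fin N) (Fin N) ℂ) (mu : ℝ) (ψ : Eu n → Fin N → ℂ)
    (j : Fin n) (y : Eu n) : ℝ :=
  2 * (∑ i, y i * rinner (ψ y) ((γ j).mulVec (epd ψ i y))) - mu * (nsq (ψ y))^2 * y j

def Ff (γ : Fin n → Matrix (Fin N) (Fin N) ℂ) (mu : ℝ) (ψ : Eu n → Fin N → ℂ) (η : ℝ → ℝ)
    (j : Fin n) (y : Eu n) : ℝ :=
  η ‖y‖ * Vv γ mu ψ j y

lemma contDiff_V (hψ : ContDiff ℝ (⊤ : ℕ∞) ψ) (j : Fin n) :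
    ContDiff ℝ (⊤ : ℕ∞) (Vv γ mu ψ j) := by
  unfold Vv
  apply ContDiff.sub
  · apply ContDiff.mul contDiff_const
    apply ContDiff.sum
    intro i _
    exact ((EuclideanSpace.proj (𝕜 := ℝ) i).contDiff).mul (contDiff_Q hψ j i)
  · exact (ContDiff.mul contDiff_const ((contDiff_nsq_psi hψ).pow 2)).mul
      ((EuclideanSpace.proj (𝕜 := ℝ) j).contDiff)

lemma contDiff_F (hψ : ContDiff ℝ (⊤ : ℕ∞) ψ) (hη : ContDiff ℝ (⊤ : ℕ∞) η)
    (hη0 : ∃ δ > (0 : ℝ), ∀ t : ℝ, |t| < δ → η t = η 0) (j : Fin n) :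
    ContDiff ℝ (⊤ : ℕ∞) (Ff γ mu ψ η j) :=
  (contDiff_eta_norm hη hη0).mul (contDiff_V hψ j)

lemma support_F (hηsupp : HasCompactSupport η) (j : Fin n) :
    HasCompactSupport (Ff γ mu ψ η j) :=
  (hasCompactSupport_eta_norm (n := n) hηsupp).mul_right

lemma sum_epdg_V (hψ : ContDiff ℝ (⊤ : ℕ∞) ψ) (hη : ContDiff ℝ (⊤ : ℕ∞) η)
    (hη0 : ∃ δ > (0 : ℝ), ∀ t : ℝ, |t| < δ → η t = η 0) (x : Eu n) :
    ∑ j, epd (fun y => η ‖y‖) j x * Vv γ mu ψ j x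
      = (2 * radTerm γ ψ 0 x - mu * (nsq (ψ x))^2) * (‖x‖ * deriv η ‖x‖) := by
  by_cases hx : x = 0
  · subst hx
    simp [epd_eta_norm_zero hη0]
  · have hr : ‖x‖ ≠ 0 := norm_ne_zero_iff.mpr hx
    have hrad : radTerm γ ψ 0 x
        = (∑ j, x j * (∑ i, x i * rinner (ψ x) ((γ j).mulVec (epd ψ i x)))) / ‖x‖^2 := by
      unfold radTerm
      rw [Finset.sum_div]
      refine Finset.sum_congr rfl fun j _ => ?_
      rw [Finset.mul_sum, Finset.sum_div]
      refine Finset.sum_congr rfl fun i _ => ?_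
      simp only [sub_zero]
      have h0 : (0 : Eu n) j = 0 := rfl
      have h0' : (0 : Eu n) i = 0 := rfl
      rw [h0, h0', sub_zero, sub_zero]
      ring
    have key : ∀ j : Fin n, epd (fun y => η ‖y‖) j x * Vv γ mu ψ j x
        = (2 * deriv η ‖x‖ / ‖x‖)
            * (x j * (∑ i, x i * rinner (ψ x) ((γ j).mulVec (epd ψ i x))))
          - (deriv η ‖x‖ * mu * (nsq (ψ x))^2 / ‖x‖) * (x j * x j) := by
      intro j
      rw [epd_eta_norm hη hx j]
      unfold Vv
      ring
    rw [Finset.sum_congr rfl fun j _ => key j, Finset.sum_sub_distrib, ← Finset.mul_sum,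
      ← Finset.mul_sum, norm_sq_eq_sum, hrad]
    field_simp

lemma sum_epd_F (hγ : IsCliffordFamily γ) (hψ : ContDiff ℝ (⊤ : ℕ∞) ψ)
    (hsoler : IsSolerSolution γ lam mu ψ) (hη : ContDiff ℝ (⊤ : ℕ∞) η)
    (hη0 : ∃ δ > (0 : ℝ), ∀ t : ℝ, |t| < δ → η t = η 0) (x : Eu n) :
    ∑ j, epd (Ff γ mu ψ η j) j x
      = (2 * lam * nsq (ψ x) + (2 - (n : ℝ)) * mu * (nsq (ψ x))^2) * η ‖x‖
        + (2 * radTerm γ ψ 0 x - mu * (nsq (ψ x))^2) * (‖x‖ * deriv η ‖x‖) := by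
  have dg : Differentiable ℝ (fun y : Eu n => η ‖y‖) :=
    (contDiff_eta_norm hη hη0).differentiable (by simp)
  have dV : ∀ j, Differentiable ℝ (Vv γ mu ψ j) :=
    fun j => (contDiff_V hψ j).differentiable (by simp)
  have expand : ∀ j : Fin n, epd (Ff γ mu ψ η j) j x
      = epd (fun y => η ‖y‖) j x * Vv γ mu ψ j x + η ‖x‖ * epd (Vv γ mu ψ j) j x := by
    intro j
    exact epd_mul (dg x) ((dV j) x) j
  rw [Finset.sum_congr rfl fun j _ => expand j, Finset.sum_add_distrib, ← Finset.mul_sum]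
  have h1 : ∑ j, epd (Vv γ mu ψ j) j x
      = 2 * lam * nsq (ψ x) + (2 - (n : ℝ)) * mu * (nsq (ψ x))^2 :=
    sum_epd_V hγ hψ hsoler x
  rw [h1, sum_epdg_V hψ hη hη0 x]
  ring

lemma integrable_epd_F (hψ : ContDiff ℝ (⊤ : ℕ∞) ψ) (hη : ContDiff ℝ (⊤ : ℕ∞) η)
    (hη0 : ∃ δ > (0 : ℝ), ∀ t : ℝ, |t| < δ → η t = η 0) (hηsupp : HasCompactSupport η)
    (j : Fin n) : Integrable (fun x => epd (Ff γ mu ψ η j) j x) := by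
  have hF := contDiff_F (γ := γ) (mu := mu) hψ hη hη0 j
  have hcont : Continuous (fun x => epd (Ff γ mu ψ η j) j x) :=
    (contDiff_epd hF j).continuous
  have hsupp : HasCompactSupport (fun x => epd (Ff γ mu ψ η j) j x) :=
    (support_F hηsupp j).fderiv_apply (𝕜 := ℝ) (EuclideanSpace.single j 1)
  exact hcont.integrable_of_hasCompactSupport hsupp

lemma integral_epd_F (hψ : ContDiff ℝ (⊤ : ℕ∞) ψ) (hη : ContDiff ℝ (⊤ : ℕ∞) η)
    (hη0 : ∃ δ > (0 : ℝ), ∀ t : ℝ, |t| < δ → η t = η 0) (hηsupp : HasCompactSupport η)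
    (j : Fin n) : ∫ x, epd (Ff γ mu ψ η j) j x = 0 := by
  have hF := contDiff_F (γ := γ) (mu := mu) hψ hη hη0 j
  have hFs := support_F (γ := γ) (mu := mu) (ψ := ψ) (η := η) hηsupp j
  have hInt1 : Integrable
      (fun x => fderiv ℝ (Ff γ mu ψ η j) x (EuclideanSpace.single j 1) * (fun _ => (1:ℝ)) x) := by
    simpa [mul_one, epd] using integrable_epd_F (γ := γ) (mu := mu) hψ hη hη0 hηsupp j
  have hInt2 : Integrable
      (fun x => Ff γ mu ψ η j x * fderiv ℝ (fun _ : Eu n => (1:ℝ)) x (EuclideanSpace.single j 1)) := by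
    simpa [fderiv_const] using (integrable_zero (Eu n) ℝ volume)
  have hInt3 : Integrable (fun x => Ff γ mu ψ η j x * (fun _ : Eu n => (1:ℝ)) x) := by
    simpa [mul_one] using hF.continuous.integrable_of_hasCompactSupport hFs
  have h := integral_mul_fderiv_eq_neg_fderiv_mul_of_integrable hInt1 hInt2 hInt3
    (fun x _ => (hF.differentiable (by simp)) x) (fun x _ => differentiableAt_const (1:ℝ))
  simp only [fderiv_const, fderiv_const_apply, Pi.zero_apply, ContinuousLinearMap.zero_apply, mul_zero, mul_one,
    integral_zero] at h
  have h2 : ∫ x, fderiv ℝ (Ff γ mu ψ η j) x (EuclideanSpace.single j 1) = 0 := by linarith [h]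
  exact h2

end Main

theorem soler_pohozaev' {n N : ℕ} (hn : 1 ≤ n) (hN : 1 ≤ N)
    (γ : Fin n → Matrix (Fin N) (Fin N) ℂ) (hγ : IsCliffordFamily γ)
    (lam mu : ℝ) (ψ : EuclideanSpace ℝ (Fin n) → (Fin N → ℂ))
    (hψ : ContDiff ℝ (⊤ : ℕ∞) ψ) (hsoler : IsSolerSolution γ lam mu ψ)
    (η : ℝ → ℝ) (hη : ContDiff ℝ (⊤ : ℕ∞) η) (hηsupp : HasCompactSupport η)
    (hη0 : ∃ δ > (0 : ℝ), ∀ t : ℝ, |t| < δ → η t = η 0) :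
    ∫ x : EuclideanSpace ℝ (Fin n),
        (2 * lam * nsq (ψ x) + (2 - (n : ℝ)) * mu * (nsq (ψ x)) ^ 2) * η ‖x‖
      = -∫ x : EuclideanSpace ℝ (Fin n),
          (2 * radTerm γ ψ 0 x - mu * (nsq (ψ x)) ^ 2) * (‖x‖ * deriv η ‖x‖) := by
  classical
  set A : Eu n → ℝ := fun x =>
    (2 * lam * nsq (ψ x) + (2 - (n : ℝ)) * mu * (nsq (ψ x)) ^ 2) * η ‖x‖ with hA
  set B : Eu n → ℝ := fun x =>
    (2 * radTerm γ ψ 0 x - mu * (nsq (ψ x)) ^ 2) * (‖x‖ * deriv η ‖x‖) with hB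
  have hdiv : ∀ x, ∑ j, epd (Ff γ mu ψ η j) j x = A x + B x :=
    fun x => sum_epd_F hγ hψ hsoler hη hη0 x
  have hA_int : Integrable A := by
    have hcont : Continuous A := by
      apply Continuous.mul
      · apply Continuous.add
        · exact (ContDiff.mul contDiff_const (contDiff_nsq_psi hψ)).continuous
        · exact (ContDiff.mul contDiff_const ((contDiff_nsq_psi hψ).pow 2)).continuous
      · exact (contDiff_eta_norm hη hη0).continuous
    have hsupp : HasCompactSupport A := by
      have h := (hasCompactSupport_eta_norm (n := n) hηsupp).mul_left
        (f := fun x => 2 * lam * nsq (ψ x) + (2 - (n : ℝ)) * mu * (nsq (ψ x)) ^ 2)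
      exact h
    exact hcont.integrable_of_hasCompactSupport hsupp
  have hAB_int : Integrable (fun x => A x + B x) := by
    have h : (fun x => A x + B x) = fun x => ∑ j, epd (Ff γ mu ψ η j) j x :=
      funext fun x => (hdiv x).symm
    rw [h]
    exact integrable_finset_sum _ fun j _ => integrable_epd_F hψ hη hη0 hηsupp j
  have hB_int : Integrable B := by
    have h : B = fun x => (A x + B x) - A x := by funext x; ring
    rw [h]
    exact hAB_int.sub hA_int
  have hzero : ∫ x, (A x + B x) = 0 := by
    have h : (fun x => A x + B x) = fun x => ∑ j, epd (Ff γ mu ψ η j) j x :=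
      funext fun x => (hdiv x).symm
    rw [h, integral_finset_sum _ fun j _ => integrable_epd_F hψ hη hη0 hηsupp j]
    simp [integral_epd_F hψ hη hη0 hηsupp]
  rw [integral_add hA_int hB_int] at hzero
  have : ∫ x, A x = - ∫ x, B x := by linarith
  exact this

end SolerAux

/-- Pohozaev-type identity for smooth solutions of the Soler equation,
tested against a compactly supported radial cutoff which is constant near the origin. -/
theorem soler_pohozaev {n N : ℕ} (hn : 1 ≤ n) (hN : 1 ≤ N)
    (γ : Fin n → Matrix (Fin N) (Fin N) ℂ) (hγ : IsCliffordFamily γ)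
    (lam mu : ℝ) (ψ : EuclideanSpace ℝ (Fin n) → (Fin N → ℂ))
    (hψ : ContDiff ℝ (⊤ : ℕ∞) ψ) (hsoler : IsSolerSolution γ lam mu ψ)
    (η : ℝ → ℝ) (hη : ContDiff ℝ (⊤ : ℕ∞) η) (hηsupp : HasCompactSupport η)
    (hη0 : ∃ δ > (0 : ℝ), ∀ t : ℝ, |t| < δ → η t = η 0) :
    ∫ x : EuclideanSpace ℝ (Fin n),
        (2 * lam * nsq (ψ x) + (2 - (n : ℝ)) * mu * (nsq (ψ x)) ^ 2) * η ‖x‖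
      = -∫ x : EuclideanSpace ℝ (Fin n),
          (2 * radTerm γ ψ 0 x - mu * (nsq (ψ x)) ^ 2) * (‖x‖ * deriv η ‖x‖) :=
  SolerAux.soler_pohozaev' hn hN γ hγ lam mu ψ hψ hsoler η hη hηsupp hη0
end
end

section
/- Analytic Liouville lemma (the engine of the Liouville theorem on complete manifolds with positive Ricci curvature, specialized to Euclidean space): let n ≥ 1 and let f : ℝⁿ → ℝ be a smooth nonnegative function satisfying the pointwise differential inequality 2 f(x) Δf(x) ≥ |∇f(x)|² for all x ∈ ℝⁿ (equivalently, √(f+ε) is subharmonic for every ε > 0), where Δ = ∑ᵢ∂ᵢ∂ᵢ and ∇f is the gradient. If ∫_{ℝⁿ} f dx < ∞, then f ≡ 0. -/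
open MeasureTheory

noncomputable section

/-- Euclidean Laplacian. -/
def lapl {n : ℕ} (f : EuclideanSpace ℝ (Fin n) → ℝ) (x : EuclideanSpace ℝ (Fin n)) : ℝ :=
  ∑ i, epd (epd f i) i x

/-- Shorthand for Euclidean space used in the auxiliary lemmas below. -/
abbrev E (n : ℕ) := EuclideanSpace ℝ (Fin n)

variable {n : ℕ}

lemma epd_contDiff {f : E n → ℝ} (hf : ContDiff ℝ (⊤:ℕ∞) f) (i : Fin n) :
    ContDiff ℝ (⊤:ℕ∞) (epd f i) :=
  (hf.fderiv_right (by simp)).clm_apply contDiff_const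

lemma ibp {ψ g : E n → ℝ} (hψ : ContDiff ℝ (⊤:ℕ∞) ψ) (hψc : HasCompactSupport ψ)
    (hg : ContDiff ℝ (⊤:ℕ∞) g) (i : Fin n) :
    ∫ x, ψ x * epd g i x = - ∫ x, epd ψ i x * g x := by
  have hψd : Differentiable ℝ ψ := hψ.differentiable (by simp)
  have hgd : Differentiable ℝ g := hg.differentiable (by simp)
  have hepdψ : HasCompactSupport (epd ψ i) :=
    (HasCompactSupport.fderiv (𝕜 := ℝ) hψc).comp_left
      (g := fun L : (E n) →L[ℝ] ℝ => L (EuclideanSpace.single i 1)) rfl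
  have h1 : Integrable (fun x => epd ψ i x * g x) :=
    ((epd_contDiff hψ i).continuous.mul hg.continuous).integrable_of_hasCompactSupport
      (hepdψ.mul_right)
  have h2 : Integrable (fun x => ψ x * epd g i x) :=
    (hψ.continuous.mul (epd_contDiff hg i).continuous).integrable_of_hasCompactSupport
      (hψc.mul_right)
  have h3 : Integrable (fun x => ψ x * g x) :=
    (hψ.continuous.mul hg.continuous).integrable_of_hasCompactSupport (hψc.mul_right)
  exact integral_mul_fderiv_eq_neg_fderiv_mul_of_integrable h1 h2 h3 (fun x _ => hψd x) (fun x _ => hgd x)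

lemma epd_psi {f φ : E n → ℝ} (hf : ContDiff ℝ (⊤:ℕ∞) f) (hφ : ContDiff ℝ (⊤:ℕ∞) φ)
    (hpos : ∀ y, 0 ≤ f y) (i : Fin n) (x : E n) :
    epd (fun y => φ y * φ y * (f y / (f y + 1))) i x =
      2 * φ x * epd φ i x * (f x / (f x + 1)) + φ x * φ x * (epd f i x / (f x + 1)^2) := by
  have hfd := (hf.differentiable (by simp) x).hasFDerivAt
  have hφd := (hφ.differentiable (by simp) x).hasFDerivAt
  have hne : f x + 1 ≠ 0 := by have := hpos x; positivity
  have hg : HasDerivAt (fun t : ℝ => t / (t + 1)) ((1 * (f x + 1) - f x * 1) / (f x + 1) ^ 2) (f x) :=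
    (hasDerivAt_id (f x)).div ((hasDerivAt_id (f x)).add_const 1) hne
  have hcomp : HasFDerivAt (fun y => f y / (f y + 1))
      (((1 * (f x + 1) - f x * 1) / (f x + 1) ^ 2) • fderiv ℝ f x) x :=
    hg.comp_hasFDerivAt x hfd
  have hd := (hφd.mul hφd).mul hcomp
  rw [epd, show (fun y => φ y * φ y * (f y / (f y + 1))) = (φ * φ * fun y => f y / (f y + 1)) from rfl, hd.fderiv]
  simp only [ContinuousLinearMap.add_apply, ContinuousLinearMap.smul_apply,
    ContinuousLinearMap.coe_smul', Pi.smul_apply, smul_eq_mul, Pi.mul_apply]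
  rw [show (fderiv ℝ f x) (EuclideanSpace.single i 1) = epd f i x from rfl,
    show (fderiv ℝ φ x) (EuclideanSpace.single i 1) = epd φ i x from rfl]
  field_simp
  ring

lemma keyineq (a b c t : ℝ) (ht : 0 ≤ t) :
    -(2 * ((2 * a * b * (t / (t + 1)) + a * a * (c / (t + 1) ^ 2)) * c)) ≤
      1 / 2 * (a * a * (c ^ 2 / (t + 1))) + 8 * (b ^ 2 * t) := by
  have hw : (0:ℝ) < t + 1 := by linarith
  rw [← sub_nonneg]
  have expand : 1 / 2 * (a * a * (c ^ 2 / (t + 1))) + 8 * (b ^ 2 * t) -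
      (-(2 * ((2 * a * b * (t / (t + 1)) + a * a * (c / (t + 1) ^ 2)) * c)))
      = ((1 / 2 * (a * a * c ^ 2) * (t + 1) + 8 * b ^ 2 * t * (t + 1) ^ 2) +
          (4 * a * b * c * t * (t + 1) + 2 * a * a * c ^ 2)) / (t + 1) ^ 2 := by
    field_simp
    ring
  rw [expand]
  apply div_nonneg _ (by positivity)
  nlinarith [mul_nonneg (sq_nonneg (a * c + 4 * b * t)) hw.le,
    mul_nonneg (mul_nonneg (sq_nonneg b) ht) hw.le, sq_nonneg (a * c)]

lemma caccioppoli {f φ : E n → ℝ} (hf : ContDiff ℝ (⊤:ℕ∞) f) (hpos : ∀ x, 0 ≤ f x)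
    (hineq : ∀ x, (∑ i, (epd f i x) ^ 2) ≤ 2 * f x * lapl f x)
    (hφ : ContDiff ℝ (⊤:ℕ∞) φ) (hφc : HasCompactSupport φ) :
    ∫ x, φ x * φ x * ((∑ i, (epd f i x) ^ 2) / (f x + 1)) ≤
      16 * ∫ x, (∑ i, (epd φ i x) ^ 2) * f x := by
  classical
  set ψ : E n → ℝ := fun y => φ y * φ y * (f y / (f y + 1)) with hψdef
  have hne : ∀ x : E n, f x + 1 ≠ 0 := fun x => by have := hpos x; positivity
  have hw : ∀ x : E n, (0:ℝ) < f x + 1 := fun x => by have := hpos x; linarith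
  have hψ : ContDiff ℝ (⊤:ℕ∞) ψ :=
    (hφ.mul hφ).mul (hf.div (hf.add contDiff_const) hne)
  have hψc : HasCompactSupport ψ := by
    apply HasCompactSupport.intro hφc.isCompact
    intro x hx
    have : φ x = 0 := image_eq_zero_of_notMem_tsupport hx
    simp [hψdef, this]
  -- continuity facts
  have hfc := hf.continuous
  have hφcont := hφ.continuous
  have hScont : Continuous fun x => ∑ i, (epd f i x)^2 :=
    continuous_finset_sum _ (fun i _ => ((epd_contDiff hf i).continuous.pow 2))
  have hBcont : Continuous fun x => ∑ i, (epd φ i x)^2 :=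
    continuous_finset_sum _ (fun i _ => ((epd_contDiff hφ i).continuous.pow 2))
  have hLcont : Continuous (lapl f) :=
    continuous_finset_sum _ (fun i _ => (epd_contDiff (epd_contDiff hf i) i).continuous)
  -- compact support of φ*φ-ish things
  have hsupp2 : HasCompactSupport (fun x => φ x * φ x * ((∑ i, (epd f i x) ^ 2) / (f x + 1))) := by
    apply HasCompactSupport.intro hφc.isCompact
    intro x hx
    simp [image_eq_zero_of_notMem_tsupport hx]
  have hTcont : Continuous fun x => φ x * φ x * ((∑ i, (epd f i x) ^ 2) / (f x + 1)) :=
    (hφcont.mul hφcont).mul (hScont.div (hfc.add continuous_const) hne)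
  have hIG : Integrable (fun x => φ x * φ x * ((∑ i, (epd f i x) ^ 2) / (f x + 1))) :=
    hTcont.integrable_of_hasCompactSupport hsupp2
  have hBf : Integrable (fun x => (∑ i, (epd φ i x)^2) * f x) := by
    apply (hBcont.mul hfc).integrable_of_hasCompactSupport
    apply HasCompactSupport.intro ((HasCompactSupport.fderiv (𝕜 := ℝ) hφc).isCompact)
    intro x hx
    have : fderiv ℝ φ x = 0 := image_eq_zero_of_notMem_tsupport hx
    simp [epd, this]
  have hψlapl : Integrable (fun x => ψ x * lapl f x) :=
    (hψ.continuous.mul hLcont).integrable_of_hasCompactSupport hψc.mul_right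
  -- Step 1 : pointwise ∫ G ≤ 2 ∫ ψ lapl f
  have step1 : ∫ x, φ x * φ x * ((∑ i, (epd f i x) ^ 2) / (f x + 1)) ≤
      ∫ x, 2 * (ψ x * lapl f x) := by
    apply integral_mono hIG (hψlapl.const_mul 2)
    intro x
    have h := mul_le_mul_of_nonneg_left (hineq x)
      (show (0:ℝ) ≤ φ x * φ x * (f x + 1)⁻¹ from mul_nonneg (mul_self_nonneg _) (inv_nonneg.2 (hw x).le))
    simp only [hψdef, div_eq_mul_inv]
    calc φ x * φ x * ((∑ i, epd f i x ^ 2) * (f x + 1)⁻¹)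
        = φ x * φ x * (f x + 1)⁻¹ * (∑ i, epd f i x ^ 2) := by ring
      _ ≤ φ x * φ x * (f x + 1)⁻¹ * (2 * f x * lapl f x) := h
      _ = 2 * (φ x * φ x * (f x * (f x + 1)⁻¹) * lapl f x) := by ring
  -- Step 2 : ∫ ψ lapl f = ∑ i ∫ ψ * ∂ii f
  have step2 : ∫ x, ψ x * lapl f x = ∑ i, ∫ x, ψ x * epd (epd f i) i x := by
    rw [← integral_finset_sum]
    · congr 1; ext x; rw [lapl, Finset.mul_sum]
    · intro i _
      exact (hψ.continuous.mul (epd_contDiff (epd_contDiff hf i) i).continuous)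
        |>.integrable_of_hasCompactSupport hψc.mul_right
  -- Step 3 : IBP each term
  have step3 : ∀ i, ∫ x, ψ x * epd (epd f i) i x = - ∫ x, epd ψ i x * epd f i x :=
    fun i => ibp hψ hψc (epd_contDiff hf i) i
  -- step 4 : pointwise bound on the integrand after IBP
  have hint_i : ∀ i : Fin n, Integrable (fun x => -(2 * (epd ψ i x * epd f i x))) := by
    intro i
    have hcs : HasCompactSupport (epd ψ i) :=
      (HasCompactSupport.fderiv (𝕜 := ℝ) hψc).comp_left
        (g := fun L : (E n) →L[ℝ] ℝ => L (EuclideanSpace.single i 1)) rfl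
    refine ((continuous_const.mul ((epd_contDiff hψ i).continuous.mul
      (epd_contDiff hf i).continuous)).neg).integrable_of_hasCompactSupport ?_
    apply HasCompactSupport.intro hcs.isCompact
    intro x hx
    simp [image_eq_zero_of_notMem_tsupport hx]
  have step4 : ∫ x, ∑ i, -(2 * (epd ψ i x * epd f i x)) ≤
      ∫ x, (1 / 2 * (φ x * φ x * ((∑ i, (epd f i x) ^ 2) / (f x + 1))) +
        8 * ((∑ i, (epd φ i x) ^ 2) * f x)) := by
    apply integral_mono (integrable_finset_sum _ (fun i _ => hint_i i))
      ((hIG.const_mul _).add (hBf.const_mul _))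
    intro x
    have hsum : ∑ i, -(2 * (epd ψ i x * epd f i x)) ≤
        ∑ i, (1 / 2 * (φ x * φ x * ((epd f i x) ^ 2 / (f x + 1))) +
          8 * ((epd φ i x) ^ 2 * f x)) := by
      apply Finset.sum_le_sum
      intro i _
      rw [hψdef, epd_psi hf hφ hpos i x]
      have := keyineq (φ x) (epd φ i x) (epd f i x) (f x) (hpos x)
      calc -(2 * ((2 * φ x * epd φ i x * (f x / (f x + 1)) +
              φ x * φ x * (epd f i x / (f x + 1) ^ 2)) * epd f i x))
          = -(2 * ((2 * φ x * epd φ i x * (f x / (f x + 1)) +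
              φ x * φ x * (epd f i x / (f x + 1) ^ 2)) * epd f i x)) := rfl
        _ ≤ _ := this
    refine hsum.trans (le_of_eq ?_)
    simp only [Finset.sum_add_distrib, Finset.sum_div, Finset.mul_sum, Finset.sum_mul,
      Pi.add_apply]
  -- assembly
  have e2 : ∫ x, 2 * (ψ x * lapl f x) = 2 * ∫ x, ψ x * lapl f x := integral_const_mul 2 _
  have e3 : 2 * ∫ x, ψ x * lapl f x = ∫ x, ∑ i, -(2 * (epd ψ i x * epd f i x)) := by
    rw [step2, Finset.mul_sum, integral_finset_sum _ (fun i _ => hint_i i)]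
    apply Finset.sum_congr rfl
    intro i _
    rw [step3 i]
    rw [show (fun x => -(2 * (epd ψ i x * epd f i x))) = fun x => 2 * -(epd ψ i x * epd f i x) by
      ext x; ring]
    rw [integral_const_mul 2 _, integral_neg]
  have e4 : ∫ x, (1 / 2 * (φ x * φ x * ((∑ i, (epd f i x) ^ 2) / (f x + 1))) +
        8 * ((∑ i, (epd φ i x) ^ 2) * f x))
      = 1 / 2 * (∫ x, φ x * φ x * ((∑ i, (epd f i x) ^ 2) / (f x + 1))) +
        8 * ∫ x, (∑ i, (epd φ i x) ^ 2) * f x := by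
    rw [integral_add (hIG.const_mul _) (hBf.const_mul _), integral_const_mul, integral_const_mul]
  have final : ∫ x, φ x * φ x * ((∑ i, (epd f i x) ^ 2) / (f x + 1)) ≤
      1 / 2 * (∫ x, φ x * φ x * ((∑ i, (epd f i x) ^ 2) / (f x + 1))) +
        8 * ∫ x, (∑ i, (epd φ i x) ^ 2) * f x := by
    calc ∫ x, φ x * φ x * ((∑ i, (epd f i x) ^ 2) / (f x + 1))
        ≤ ∫ x, 2 * (ψ x * lapl f x) := step1
      _ = ∫ x, ∑ i, -(2 * (epd ψ i x * epd f i x)) := by rw [e2, e3]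
      _ ≤ _ := step4.trans (le_of_eq e4)
  linarith

section cutoff
variable (n)

/-- A fixed smooth bump: 1 on the unit ball, supported in the ball of radius 2. -/
def bump : ContDiffBump (0 : E n) := ⟨1, 2, one_pos, one_lt_two⟩

def chi : E n → ℝ := fun x => bump n x

lemma chi_contDiff : ContDiff ℝ (⊤:ℕ∞) (chi n) := (bump n).contDiff

lemma chi_compact : HasCompactSupport (chi n) := (bump n).hasCompactSupport

lemma chi_nonneg (x : E n) : 0 ≤ chi n x := (bump n).nonneg

lemma chi_one {x : E n} (hx : ‖x‖ ≤ 1) : chi n x = 1 :=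
  (bump n).one_of_mem_closedBall (by simpa [Metric.mem_closedBall, dist_zero_right, bump] using hx)

def phiR (R : ℝ) : E n → ℝ := fun x => chi n (R⁻¹ • x)

lemma phiR_contDiff {R : ℝ} (hR : 0 < R) : ContDiff ℝ (⊤:ℕ∞) (phiR n R) :=
  (chi_contDiff n).comp (contDiff_id.const_smul R⁻¹)

lemma phiR_compact {R : ℝ} (hR : 0 < R) : HasCompactSupport (phiR n R) := by
  apply HasCompactSupport.intro (isCompact_closedBall (0 : E n) (2 * R))
  intro x hx
  apply (bump n).zero_of_le_dist
  simp only [Metric.mem_closedBall, dist_zero_right, not_le] at hx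
  rw [dist_zero_right, norm_smul, norm_inv, Real.norm_eq_abs, abs_of_pos hR]
  show (2 : ℝ) ≤ R⁻¹ * ‖x‖
  rw [le_inv_mul_iff₀ hR]
  linarith

lemma phiR_one {R : ℝ} (hR : 0 < R) {x : E n} (hx : ‖x‖ ≤ R) : phiR n R x = 1 := by
  apply chi_one
  rw [norm_smul, norm_inv, Real.norm_eq_abs, abs_of_pos hR, inv_mul_le_one₀ hR]
  exact hx

lemma epd_phiR {R : ℝ} (hR : 0 < R) (i : Fin n) (x : E n) :
    epd (phiR n R) i x = R⁻¹ * epd (chi n) i (R⁻¹ • x) := by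
  have h1 : HasFDerivAt (fun y : E n => R⁻¹ • y)
      (R⁻¹ • ContinuousLinearMap.id ℝ (E n)) x := (hasFDerivAt_id x).const_smul R⁻¹
  have h2 := ((chi_contDiff n).differentiable (by simp) (R⁻¹ • x)).hasFDerivAt
  have h3 : HasFDerivAt (phiR n R)
      ((fderiv ℝ (chi n) (R⁻¹ • x)).comp (R⁻¹ • ContinuousLinearMap.id ℝ (E n))) x := h2.comp x h1
  rw [epd, h3.fderiv]
  simp [epd, ContinuousLinearMap.map_smul, smul_eq_mul]

end cutoff

/-- analytic Liouville lemma on `ℝⁿ`: a smooth nonnegative integrable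
function satisfying `2 f Δf ≥ |∇f|²` pointwise vanishes identically. -/
theorem analytic_liouville {n : ℕ} (hn : 1 ≤ n)
    (f : EuclideanSpace ℝ (Fin n) → ℝ) (hf : ContDiff ℝ (⊤ : ℕ∞) f)
    (hpos : ∀ x, 0 ≤ f x)
    (hineq : ∀ x, (∑ i, (epd f i x) ^ 2) ≤ 2 * f x * lapl f x)
    (hint : Integrable f volume) :
    ∀ x, f x = 0 := by
  classical
  have hw : ∀ x : E n, (0:ℝ) < f x + 1 := fun x => by have := hpos x; linarith
  -- uniform bound for the gradient of the fixed bump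
  have hSχcont : Continuous fun y : E n => ∑ i, (epd (chi n) i y) ^ 2 :=
    continuous_finset_sum _ (fun i _ => ((epd_contDiff (chi_contDiff n) i).continuous.pow 2))
  have hSχsupp : HasCompactSupport (fun y : E n => ∑ i, (epd (chi n) i y) ^ 2) := by
    apply HasCompactSupport.intro (HasCompactSupport.fderiv (𝕜 := ℝ) (chi_compact n)).isCompact
    intro y hy
    have : fderiv ℝ (chi n) y = 0 := image_eq_zero_of_notMem_tsupport hy
    simp [epd, this]
  obtain ⟨M, hM⟩ := hSχcont.bddAbove_range_of_hasCompactSupport hSχsupp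
  have hM' : ∀ y : E n, ∑ i, (epd (chi n) i y) ^ 2 ≤ M := fun y => hM (Set.mem_range_self y)
  have hM0 : 0 ≤ M := le_trans (Finset.sum_nonneg fun i _ => sq_nonneg _) (hM' 0)
  have hI0 : 0 ≤ ∫ x, f x := integral_nonneg hpos
  -- main estimate
  have est : ∀ R : ℝ, 0 < R →
      ∫ x, phiR n R x * phiR n R x * ((∑ i, (epd f i x) ^ 2) / (f x + 1)) ≤
        16 * M * (∫ x, f x) / R ^ 2 := by
    intro R hR
    refine (caccioppoli hf hpos hineq (phiR_contDiff n hR) (phiR_compact n hR)).trans ?_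
    have hBfR : Integrable (fun x => (∑ i, (epd (phiR n R) i x) ^ 2) * f x) := by
      refine ((continuous_finset_sum _
        (fun i _ => ((epd_contDiff (phiR_contDiff n hR) i).continuous.pow 2))).mul
        hf.continuous).integrable_of_hasCompactSupport ?_
      apply HasCompactSupport.intro
        (HasCompactSupport.fderiv (𝕜 := ℝ) (phiR_compact n hR)).isCompact
      intro y hy
      have : fderiv ℝ (phiR n R) y = 0 := image_eq_zero_of_notMem_tsupport hy
      simp [epd, this]
    have hb : ∀ x, (∑ i, (epd (phiR n R) i x) ^ 2) * f x ≤ M / R ^ 2 * f x := by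
      intro x
      apply mul_le_mul_of_nonneg_right _ (hpos x)
      calc ∑ i, (epd (phiR n R) i x) ^ 2
          = (R⁻¹) ^ 2 * ∑ i, (epd (chi n) i (R⁻¹ • x)) ^ 2 := by
            rw [Finset.mul_sum]
            exact Finset.sum_congr rfl fun i _ => by rw [epd_phiR n hR]; ring
        _ ≤ (R⁻¹) ^ 2 * M := mul_le_mul_of_nonneg_left (hM' _) (by positivity)
        _ = M / R ^ 2 := by rw [inv_pow]; ring
    have hmono : ∫ x, (∑ i, (epd (phiR n R) i x) ^ 2) * f x ≤ M / R ^ 2 * ∫ x, f x := by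
      rw [← integral_const_mul]
      exact integral_mono hBfR (hint.const_mul _) hb
    calc 16 * ∫ x, (∑ i, (epd (phiR n R) i x) ^ 2) * f x
        ≤ 16 * (M / R ^ 2 * ∫ x, f x) := by linarith
      _ = 16 * M * (∫ x, f x) / R ^ 2 := by ring
  -- the gradient vanishes everywhere
  have hS : ∀ x : E n, ∑ i, (epd f i x) ^ 2 = 0 := by
    intro x₀
    by_contra h0
    set g : E n → ℝ := fun x => (∑ i, (epd f i x) ^ 2) / (f x + 1) with hgdef
    have hgc : Continuous g := by
      apply Continuous.div
      · exact continuous_finset_sum _ (fun i _ => ((epd_contDiff hf i).continuous.pow 2))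
      · exact hf.continuous.add continuous_const
      · exact fun x => (hw x).ne'
    have hgnn : ∀ x, 0 ≤ g x :=
      fun x => div_nonneg (Finset.sum_nonneg fun i _ => sq_nonneg _) (hw x).le
    have hgx₀ : 0 < g x₀ := by
      apply div_pos _ (hw x₀)
      exact lt_of_le_of_ne (Finset.sum_nonneg fun i _ => sq_nonneg _) (Ne.symm h0)
    set ε : ℝ := g x₀ / 2 with hεdef
    have hε : 0 < ε := by positivity
    have hev : ∀ᶠ x in nhds x₀, ε < g x :=
      hgc.continuousAt.eventually_const_lt (by simpa [hεdef] using half_lt_self hgx₀)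
    obtain ⟨δ, hδ, hball⟩ := Metric.eventually_nhds_iff_ball.mp hev
    set v : ℝ := (volume (Metric.ball x₀ δ)).toReal with hvdef
    have hv : 0 < v := by
      rw [hvdef]
      exact ENNReal.toReal_pos (Metric.measure_ball_pos volume x₀ hδ).ne'
        measure_ball_lt_top.ne
    -- lower bound for the cutoff integral for large R
    have lower : ∀ R : ℝ, 0 < R → ‖x₀‖ + δ ≤ R → ε * v ≤ 16 * M * (∫ x, f x) / R ^ 2 := by
      intro R hR hRbig
      have hone : ∀ x ∈ Metric.ball x₀ δ, phiR n R x = 1 := by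
        intro x hx
        apply phiR_one n hR
        have : dist x x₀ < δ := Metric.mem_ball.mp hx
        calc ‖x‖ = ‖x₀ + (x - x₀)‖ := by rw [show x₀ + (x - x₀) = x by abel]
          _ ≤ ‖x₀‖ + ‖x - x₀‖ := norm_add_le _ _
          _ ≤ ‖x₀‖ + δ := by
              have := this
              rw [dist_eq_norm] at this
              linarith
          _ ≤ R := hRbig
      have hgint : IntegrableOn g (Metric.ball x₀ δ) :=
        (hgc.locallyIntegrable.integrableOn_isCompact (isCompact_closedBall x₀ δ)).mono_set
          Metric.ball_subset_closedBall
      have step_a : ε * v ≤ ∫ x in Metric.ball x₀ δ, g x := by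
        have h1 : ∫ x in Metric.ball x₀ δ, (ε : ℝ) ≤ ∫ x in Metric.ball x₀ δ, g x := by
          apply setIntegral_mono_on (integrableOn_const measure_ball_lt_top.ne)
            hgint measurableSet_ball
          intro x hx
          exact (hball x (Metric.mem_ball.mp hx)).le
        rwa [setIntegral_const, smul_eq_mul, mul_comm] at h1
      have step_b : ∫ x in Metric.ball x₀ δ, g x
          ≤ ∫ x, phiR n R x * phiR n R x * g x := by
        have heq : ∫ x in Metric.ball x₀ δ, g x
            = ∫ x in Metric.ball x₀ δ, phiR n R x * phiR n R x * g x := by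
          apply setIntegral_congr_fun measurableSet_ball
          intro x hx
          simp [hone x hx]
        rw [heq]
        apply setIntegral_le_integral
        · -- integrability of φ² g
          refine (((phiR_contDiff n hR).continuous.mul
            (phiR_contDiff n hR).continuous).mul hgc).integrable_of_hasCompactSupport ?_
          apply HasCompactSupport.intro (phiR_compact n hR).isCompact
          intro x hx
          simp [image_eq_zero_of_notMem_tsupport hx]
        · filter_upwards with x
          exact mul_nonneg (mul_self_nonneg _) (hgnn x)
      exact (step_a.trans (step_b.trans (est R hR)))
    -- choose R large enough to contradict
    set K : ℝ := 16 * M * (∫ x, f x) with hKdef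
    have hK0 : 0 ≤ K := by positivity
    set R : ℝ := max (‖x₀‖ + δ) (1 + K / (ε * v)) with hRdef
    have hR1 : 1 + K / (ε * v) ≤ R := le_max_right _ _
    have hRK : K / (ε * v) < R := by
      have : 0 ≤ K / (ε * v) := by positivity
      linarith
    have hRge1 : (1:ℝ) ≤ R := by
      have : 0 ≤ K / (ε * v) := by positivity
      linarith
    have hRpos : 0 < R := lt_of_lt_of_le one_pos hRge1
    have hcontr := lower R hRpos (le_max_left _ _)
    have hR2 : K / R ^ 2 < ε * v := by
      have h1 : K < ε * v * R := by
        have := (div_lt_iff₀ (by positivity : (0:ℝ) < ε * v)).mp hRK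
        linarith
      have h2 : R ≤ R ^ 2 := by nlinarith
      calc K / R ^ 2 ≤ K / R := by
            apply div_le_div_of_nonneg_left hK0 hRpos h2
          _ < ε * v := by
            rw [div_lt_iff₀ hRpos]
            linarith
    have : K / R ^ 2 = 16 * M * (∫ x, f x) / R ^ 2 := by rw [hKdef]
    linarith [hcontr, hR2]
  -- all partial derivatives vanish
  have hepd : ∀ (i : Fin n) (x : E n), epd f i x = 0 := by
    intro i x
    have h := hS x
    rw [Finset.sum_eq_zero_iff_of_nonneg (fun j _ => sq_nonneg _)] at h
    exact pow_eq_zero_iff two_ne_zero |>.mp (h i (Finset.mem_univ i))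
  have hfd0 : ∀ x : E n, fderiv ℝ f x = 0 := by
    intro x
    apply ContinuousLinearMap.coe_injective
    apply Module.Basis.ext (EuclideanSpace.basisFun (Fin n) ℝ).toBasis
    intro i
    rw [OrthonormalBasis.coe_toBasis]
    simp [EuclideanSpace.basisFun_apply]; exact hepd i x
  have hconst : ∀ x : E n, f x = f 0 :=
    fun x => is_const_of_fderiv_eq_zero (hf.differentiable (by simp)) hfd0 x 0
  have huniv : (volume : Measure (E n)) Set.univ = ⊤ := by
    haveI : Nontrivial (E n) := by
      refine ⟨EuclideanSpace.single ⟨0, hn⟩ 1, 0, fun h => ?_⟩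
      have := congrFun (congrArg (fun (v : E n) => (v : Fin n → ℝ)) h) ⟨0, hn⟩
      simp [EuclideanSpace.single_apply] at this
    exact measure_univ_of_isAddLeftInvariant volume
  have hc0 : f 0 = 0 := by
    have hconst_int : Integrable (fun _ : E n => f 0) volume :=
      hint.congr (Filter.Eventually.of_forall fun x => hconst x)
    rcases integrable_const_iff.mp hconst_int with h | h
    · exact h
    · have h := h.measure_univ_lt_top; rw [huniv] at h
      exact absurd h (by simp)
  intro x
  rw [hconst x, hc0]
end
end
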